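/- A strict level-k phylogenetic network (k ≥ 1) is a simple level-k network if and only if it contains no nontrivial cut-arcs. -/

import Mathlib

namespace Phylo

variable {V : Type*}

/-- In-degree of a vertex in a directed graph given by relation `R`. -/
noncomputable def inDeg (R : V → V → Prop) (v : V) : ℕ := {u | R u v}.ncard

/-- Out-degree of a vertex. -/
noncomputable def outDeg (R : V → V → Prop) (v : V) : ℕ := {w | R v w}.ncard

/-- A phylogenetic network: an acyclic digraph with a unique root of indegree 0 and
outdegree 2, in which every vertex is the root, a split vertex (indeg 1, outdeg 2),
a recombination vertex (indeg 2, outdeg 1) or a leaf (indeg 1, outdeg 0). -/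
def IsPhyloNet (R : V → V → Prop) : Prop :=
  (∀ v, ¬ Relation.TransGen R v v) ∧
  (∃! r, inDeg R r = 0) ∧
  (∀ v : V, (inDeg R v = 0 ∧ outDeg R v = 2) ∨ (inDeg R v = 1 ∧ outDeg R v = 2) ∨
    (inDeg R v = 2 ∧ outDeg R v = 1) ∨ (inDeg R v = 1 ∧ outDeg R v = 0))

/-- A leaf is a vertex of outdegree 0. -/
def IsLf (R : V → V → Prop) (v : V) : Prop := outDeg R v = 0

/-- The set of leaves of a network. -/
def netLeaves (R : V → V → Prop) : Set V := {v | IsLf R v}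

/-- `p` is a directed path (as a nonempty list of vertices) from `a` to `b`. -/
def IsPth (R : V → V → Prop) (p : List V) (a b : V) : Prop :=
  p ≠ [] ∧ p.head? = some a ∧ p.getLast? = some b ∧ p.Chain' R

/-- Internal vertices of a path. -/
def interior (p : List V) : List V := p.tail.dropLast

/-- Two paths are internally vertex-disjoint. -/
def IntDisj (p q : List V) : Prop :=
  (∀ v ∈ interior p, v ∉ q) ∧ (∀ v ∈ interior q, v ∉ p)

/-- The triplet xy|z is consistent with the network `R`: there are `u ≠ v` and pairwise
internally vertex-disjoint paths `u→x`, `u→y`, `v→u`, `v→z`. -/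
def ConsistentTrip (R : V → V → Prop) (x y z : V) : Prop :=
  ∃ u v : V, ∃ p1 p2 p3 p4 : List V, u ≠ v ∧
    IsPth R p1 u x ∧ IsPth R p2 u y ∧ IsPth R p3 v u ∧ IsPth R p4 v z ∧
    IntDisj p1 p2 ∧ IntDisj p1 p3 ∧ IntDisj p1 p4 ∧
    IntDisj p2 p3 ∧ IntDisj p2 p4 ∧ IntDisj p3 p4

/-- `(x,y,z) ∈ T` codes the rooted triplet xy|z; `trip T x y z` says xy|z ∈ T
(taking into account the symmetry xy|z = yx|z). -/
def trip (T : Set (V × V × V)) (x y z : V) : Prop := (x, y, z) ∈ T ∨ (y, x, z) ∈ T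

/-- The leaf set L(T) of a triplet set. -/
def tripLeaves (T : Set (V × V × V)) : Set V :=
  {a | ∃ t ∈ T, a = t.1 ∨ a = t.2.1 ∨ a = t.2.2}

/-- `T` is dense: every 3-element subset of L(T) supports at least one triplet of `T`. -/
def DenseT (T : Set (V × V × V)) : Prop :=
  ∀ x y z, x ∈ tripLeaves T → y ∈ tripLeaves T → z ∈ tripLeaves T →
    x ≠ y → x ≠ z → y ≠ z → trip T x y z ∨ trip T x z y ∨ trip T y z x

/-- An SN-set of `T`: a subset of L(T) closed under the operation
`S_T(X) = X ∪ {c | ∃ x y ∈ X, xc|y ∈ T}`. -/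
def IsSNSet (T : Set (V × V × V)) (Y : Set V) : Prop :=
  Y ⊆ tripLeaves T ∧
    ∀ ⦃c x y : V⦄, x ∈ Y → y ∈ Y → c ∈ tripLeaves T → trip T x c y → c ∈ Y

/-- `SN T X`: the closure of `X` under `S_T`, i.e. the smallest SN-superset of `X`. -/
def SN (T : Set (V × V × V)) (X : Set V) : Set V := ⋂₀ {Y | X ⊆ Y ∧ IsSNSet T Y}

/-- A maximal SN-set: a proper SN-set such that the only SN-set strictly containing
it is L(T) itself. -/
def MaxSN (T : Set (V × V × V)) (S : Set V) : Prop :=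
  IsSNSet T S ∧ S ≠ tripLeaves T ∧ ∀ Y, IsSNSet T Y → S ⊂ Y → Y = tripLeaves T

/-- A network is consistent with a triplet set if it is consistent with every triplet. -/
def ConsistentSet (R : V → V → Prop) (T : Set (V × V × V)) : Prop :=
  ∀ t ∈ T, ConsistentTrip R t.1 t.2.1 t.2.2

/-- A cut-arc: an arc whose removal disconnects the underlying undirected graph. -/
def CutArc (R : V → V → Prop) (u v : V) : Prop :=
  R u v ∧ ∃ a b : V, ¬ Relation.ReflTransGen
    (fun p q => (R p q ∨ R q p) ∧ ¬((p = u ∧ q = v) ∨ (p = v ∧ q = u))) a b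

/-- The set of leaves below the arc `(u,v)`: leaves reachable from `v`. -/
def leavesBelow (R : V → V → Prop) (u v : V) : Set V :=
  {ℓ | IsLf R ℓ ∧ Relation.ReflTransGen R v ℓ}

/-- A highest cut-arc: a cut-arc `(u,v)` such that there is no cut-arc `(u',v')`
with `u` reachable from `v'`. -/
def HighestCutArc (R : V → V → Prop) (u v : V) : Prop :=
  CutArc R u v ∧ ∀ u' v', CutArc R u' v' → ¬ Relation.ReflTransGen R v' u

/-- The subset `S` is connected in the underlying undirected graph. -/
def ConnOn (R : V → V → Prop) (S : Set V) : Prop :=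
  ∀ a ∈ S, ∀ b ∈ S,
    Relation.ReflTransGen (fun p q => p ∈ S ∧ q ∈ S ∧ (R p q ∨ R q p)) a b

/-- `S` induces a biconnected subgraph containing at least one arc. -/
def BiconnSet (R : V → V → Prop) (S : Set V) : Prop :=
  (∃ a ∈ S, ∃ b ∈ S, R a b) ∧ ConnOn R S ∧ ∀ w ∈ S, ConnOn R (S \ {w})

/-- A biconnected component: a maximal biconnected vertex set. -/
def IsBCC (R : V → V → Prop) (S : Set V) : Prop :=
  BiconnSet R S ∧ ∀ S', BiconnSet R S' → S ⊆ S' → S' = S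

/-- A level-k network: every biconnected component has at most `k` recombination
vertices. -/
def LevelK (k : ℕ) (R : V → V → Prop) : Prop :=
  ∀ S, IsBCC R S → ({v ∈ S | inDeg R v = 2}).ncard ≤ k

/-- A valid (non-redundant) network: every nontrivial biconnected component has at
least three outgoing arcs. -/
def GoodNet (R : V → V → Prop) : Prop :=
  IsPhyloNet R ∧ ∀ S, IsBCC R S → 3 ≤ S.ncard →
    3 ≤ {p : V × V | R p.1 p.2 ∧ p.1 ∈ S ∧ p.2 ∉ S}.ncard

end Phylo
namespace Phylo

/-- A directed multigraph, given by an edge type with source and target maps. -/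
structure MultiDigraph : Type 1 where
  W : Type
  E : Type
  src : E → W
  tgt : E → W

/-- Adjacency in a multigraph. -/
def mAdj (G : MultiDigraph) (a b : G.W) : Prop := ∃ e, G.src e = a ∧ G.tgt e = b

/-- In-degree in a multigraph (counting multiplicities). -/
noncomputable def mInDeg (G : MultiDigraph) (v : G.W) : ℕ := {e | G.tgt e = v}.ncard

/-- Out-degree in a multigraph (counting multiplicities). -/
noncomputable def mOutDeg (G : MultiDigraph) (v : G.W) : ℕ := {e | G.src e = v}.ncard

/-- A simple level-k generator: a finite biconnected acyclic multigraph with a unique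
root (indeg 0, outdeg 2), exactly `k` recombination vertices (indeg 2, outdeg ≤ 1),
all other vertices being split vertices (indeg 1, outdeg 2). -/
def IsGenerator (k : ℕ) (G : MultiDigraph) : Prop :=
  Finite G.W ∧ Finite G.E ∧
  (∀ v, ¬ Relation.TransGen (mAdj G) v v) ∧
  (∀ a b : G.W, Relation.ReflTransGen (fun p q => mAdj G p q ∨ mAdj G q p) a b) ∧
  (∀ w a b : G.W, a ≠ w → b ≠ w →
    Relation.ReflTransGen (fun p q => p ≠ w ∧ q ≠ w ∧ (mAdj G p q ∨ mAdj G q p)) a b) ∧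
  (∃! r, mInDeg G r = 0) ∧
  {v | mInDeg G v = 2}.ncard = k ∧
  (∀ v : G.W, (mInDeg G v = 0 ∧ mOutDeg G v = 2) ∨
    (mInDeg G v = 2 ∧ mOutDeg G v ≤ 1) ∨ (mInDeg G v = 1 ∧ mOutDeg G v = 2))

/-- Isomorphism of multigraphs. -/
def MIso (G H : MultiDigraph) : Prop :=
  ∃ (f : G.W → H.W) (g : G.E → H.E), Function.Bijective f ∧ Function.Bijective g ∧
    (∀ e, H.src (g e) = f (G.src e)) ∧ (∀ e, H.tgt (g e) = f (G.tgt e))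

variable {V : Type*}

/-- `a` and `b` are consecutive in the list `l`. -/
def Adjac (l : List V) (a b : V) : Prop := ∃ l1 l2, l = l1 ++ a :: b :: l2

/-- The path in the network replacing the generator arc `e`. -/
def fullPath (G : MultiDigraph) (φ : G.W → V) (ψ : G.E → List V) (e : G.E) : List V :=
  φ (G.src e) :: ψ e ++ [φ (G.tgt e)]

/-- The network `R` is obtained from the generator `G` by the leaf-hanging
transformation: each arc of `G` is replaced by a path, every internal vertex of such
a path gets a new leaf child, and every indeg-2 outdeg-0 generator vertex gets a new
leaf child; these account for all vertices and arcs of `R`. -/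
def SimpleFrom (G : MultiDigraph) (R : V → V → Prop) : Prop :=
  IsPhyloNet R ∧
  ∃ (φ : G.W → V) (ψ : G.E → List V),
    Function.Injective φ ∧
    (∀ e, (fullPath G φ ψ e).Chain' R) ∧
    (∀ e, (ψ e).Nodup) ∧
    (∀ e e', e ≠ e' → ∀ x ∈ ψ e, x ∉ ψ e') ∧
    (∀ e, ∀ x ∈ ψ e, ∀ w, x ≠ φ w) ∧
    (∀ e, ∀ x ∈ ψ e, ∃ ℓ, IsLf R ℓ ∧ R x ℓ) ∧
    (∀ w, mInDeg G w = 2 → mOutDeg G w = 0 → ∃ ℓ, IsLf R ℓ ∧ R (φ w) ℓ) ∧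
    (∀ v : V, (∃ w, v = φ w) ∨ (∃ e, v ∈ ψ e) ∨ IsLf R v) ∧
    (∀ a b : V, R a b → (∃ e, Adjac (fullPath G φ ψ e) a b) ∨
      (IsLf R b ∧ ((∃ e, a ∈ ψ e) ∨ ∃ w, mInDeg G w = 2 ∧ mOutDeg G w = 0 ∧ a = φ w)))

/-- A simple level-k network: one obtained from some simple level-k generator by
leaf hanging. -/
def SimpleLevel (k : ℕ) (R : V → V → Prop) : Prop :=
  ∃ G : MultiDigraph, IsGenerator k G ∧ SimpleFrom G R

/-- The basic tree: a root with exactly two leaf children. -/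
def BasicTree (R : V → V → Prop) : Prop :=
  ∃ r a b : V, r ≠ a ∧ r ≠ b ∧ a ≠ b ∧ (∀ v : V, v = r ∨ v = a ∨ v = b) ∧
    ∀ x y : V, R x y ↔ (x = r ∧ (y = a ∨ y = b))

/-- A simple level-≤2 network: a basic tree, a simple level-1 network or a simple
level-2 network. -/
def SimpleLE2 (R : V → V → Prop) : Prop :=
  BasicTree R ∨ SimpleLevel 1 R ∨ SimpleLevel 2 R

end Phylo
namespace Phylo
open Relation List

section Aux
variable {V : Type*}

lemma rtg_symm {P : V → V → Prop} (hs : ∀ a b, P a b → P b a) {a b : V}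
    (h : ReflTransGen P a b) : ReflTransGen P b a := by
  induction h with
  | refl => exact .refl
  | tail _ h2 ih => exact ReflTransGen.head (hs _ _ h2) ih

lemma wf_of_acyclic [Finite V] {R : V → V → Prop} (hac : ∀ v, ¬ TransGen R v v) :
    WellFounded R := by
  have : IsTrans V (TransGen R) := ⟨fun _ _ _ h h' => h.trans h'⟩
  have : IsIrrefl V (TransGen R) := ⟨hac⟩
  exact Subrelation.wf (fun h => TransGen.single h)
    (Finite.wellFounded_of_trans_of_irrefl (TransGen R))

lemma wf_flip_of_acyclic [Finite V] {R : V → V → Prop} (hac : ∀ v, ¬ TransGen R v v) :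
    WellFounded (flip R) := by
  refine wf_of_acyclic (R := flip R) (fun v hv => hac v ?_)
  have : ∀ a b : V, TransGen (flip R) a b → TransGen R b a := by
    intro a b h
    induction h with
    | single h => exact TransGen.single h
    | tail _ h2 ih => exact (TransGen.single (show R _ _ from h2)).trans ih
  exact this _ _ hv

lemma chain'_rtg_head {P : V → V → Prop} :
    ∀ (l : List V) (a : V), List.Chain' P (a :: l) → ∀ x ∈ a :: l, ReflTransGen P a x := by
  intro l
  induction l with
  | nil => intro a _ x hx; simp at hx; subst hx; exact .refl
  | cons b t ih =>
    intro a h x hx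
    rcases List.mem_cons.1 hx with rfl | hx
    · exact .refl
    · exact ReflTransGen.head (List.isChain_cons_cons.1 h).1 (ih b (List.isChain_cons_cons.1 h).2 x hx)

lemma rtg_flip {P : V → V → Prop} {a b : V} (h : ReflTransGen (flip P) a b) :
    ReflTransGen P b a := by
  induction h with
  | refl => exact .refl
  | tail _ h2 ih => exact ReflTransGen.head h2 ih

lemma chain'_rtg_last {P : V → V → Prop} (l : List V) (b : V)
    (h : List.Chain' P l) (hb : l.getLast? = some b) : ∀ x ∈ l, ReflTransGen P x b := by
  intro x hx
  have h1 : List.Chain' (flip P) l.reverse := (List.isChain_reverse).2 h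
  have hb' : l.reverse.head? = some b := by rwa [List.head?_reverse]
  obtain ⟨t, ht⟩ : ∃ t, l.reverse = b :: t := by
    cases hl : l.reverse with
    | nil => rw [hl] at hb'; simp at hb'
    | cons c t => rw [hl] at hb'; simp at hb'; exact ⟨t, by rw [hb']⟩
  rw [ht] at h1
  have hx' : x ∈ b :: t := by rw [← ht]; simpa using hx
  exact rtg_flip (chain'_rtg_head _ _ h1 x hx')

lemma rtg_closed {P : V → V → Prop} (A : Set V) (hA : ∀ x ∈ A, ∀ y, P x y → y ∈ A)
    {a b : V} (h : ReflTransGen P a b) (ha : a ∈ A) : b ∈ A := by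
  induction h with
  | refl => exact ha
  | tail h1 h2 ih => exact hA _ ih _ h2

open Classical in
lemma avoidSet {P : V → V → Prop} (hs : ∀ a b, P a b → P b a) (S : Set V)
    (nb : V → V) (hnb : ∀ x ∈ S, nb x ∉ S ∧ ∀ y, P x y → y = nb x) :
    ∀ a b, ReflTransGen P a b → b ∉ S →
      ReflTransGen (fun p q => P p q ∧ p ∉ S ∧ q ∉ S) (if a ∈ S then nb a else a) b := by
  intro a b h hb
  induction h using ReflTransGen.head_induction_on with
  | refl => rw [if_neg hb]
  | head hax _ ih =>
    rename_i a' x _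
    by_cases ha : a' ∈ S
    · have hx : x = nb a' := (hnb a' ha).2 _ hax
      have hxS : x ∉ S := hx ▸ (hnb a' ha).1
      rw [if_pos ha]
      rw [if_neg hxS] at ih
      rw [← hx]
      exact ih
    · by_cases hxS : x ∈ S
      · have hax' : a' = nb x := (hnb x hxS).2 _ (hs _ _ hax)
        rw [if_pos hxS] at ih
        rw [if_neg ha, hax']
        exact ih
      · rw [if_neg hxS] at ih
        rw [if_neg ha]
        exact ReflTransGen.head ⟨hax, ha, hxS⟩ ih

lemma avoidSet' {P : V → V → Prop} (hs : ∀ a b, P a b → P b a) (S : Set V)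
    (nb : V → V) (hnb : ∀ x ∈ S, nb x ∉ S ∧ ∀ y, P x y → y = nb x)
    {a b : V} (h : ReflTransGen P a b) (ha : a ∉ S) (hb : b ∉ S) :
      ReflTransGen (fun p q => P p q ∧ p ∉ S ∧ q ∉ S) a b := by
  have := avoidSet hs S nb hnb a b h hb
  rwa [if_neg ha] at this

lemma truncAt {P : V → V → Prop} (v0 : V) {a b : V} (h : ReflTransGen P a b) :
    a ≠ v0 →
    ∃ z, z ≠ v0 ∧ ReflTransGen (fun p q => P p q ∧ p ≠ v0 ∧ q ≠ v0) a z ∧ (z = b ∨ P z v0) := by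
  induction h using ReflTransGen.head_induction_on with
  | refl => intro hb; exact ⟨b, hb, .refl, Or.inl rfl⟩
  | head h' _ ih =>
    rename_i a' c _
    intro ha'
    by_cases hc : c = v0
    · exact ⟨a', ha', .refl, Or.inr (hc ▸ h')⟩
    · obtain ⟨z, hz, hw, ho⟩ := ih hc
      exact ⟨z, hz, .head ⟨h', ha', hc⟩ hw, ho⟩

lemma adjac_mem_tail {l : List V} {u v : V} (h : Adjac l u v) : v ∈ l.tail := by
  obtain ⟨l1, l2, rfl⟩ := h
  cases l1 with
  | nil => simp
  | cons a t => simp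

lemma adjac_mem_dropLast {l : List V} {u v : V} (h : Adjac l u v) : u ∈ l.dropLast := by
  obtain ⟨l1, l2, rfl⟩ := h
  induction l1 with
  | nil => cases l2 <;> simp
  | cons a t ih =>
    rw [List.cons_append, List.dropLast_cons_of_ne_nil (by simp)]
    simpa using Or.inr ih

lemma adjac_mem₁ {l : List V} {u v : V} (h : Adjac l u v) : u ∈ l := by
  obtain ⟨l1, l2, rfl⟩ := h; simp

lemma adjac_mem₂ {l : List V} {u v : V} (h : Adjac l u v) : v ∈ l := by
  obtain ⟨l1, l2, rfl⟩ := h; simp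

lemma adjac_cons_of {l : List V} {u v a : V} (h : Adjac l u v) : Adjac (a :: l) u v := by
  obtain ⟨l1, l2, rfl⟩ := h; exact ⟨a :: l1, l2, rfl⟩

lemma chain'_sub {R : V → V → Prop} {u v : V} (hvu : ¬ R v u) :
    ∀ l : List V, List.Chain' R l → ¬ Adjac l u v →
      List.Chain' (fun p q => R p q ∧ ¬((p = u ∧ q = v) ∨ (p = v ∧ q = u))) l := by
  intro l
  induction l with
  | nil => intro _ _; exact List.isChain_nil
  | cons x t ih =>
    intro hch hna
    cases t with
    | nil => exact List.isChain_singleton _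
    | cons y t' =>
      rw [List.Chain', List.isChain_cons_cons] at hch ⊢
      refine ⟨⟨hch.1, ?_⟩, ih hch.2 (fun h => hna (adjac_cons_of h))⟩
      rintro (⟨rfl, rfl⟩ | ⟨rfl, rfl⟩)
      · exact hna ⟨[], t', rfl⟩
      · exact hvu hch.1

end Aux

section AdjacLemmas
variable {V : Type*}

lemma nodup_head_not_tail {l : List V} (h : l.Nodup) {a : V} (ha : l.head? = some a)
    {x : V} (hx : x ∈ l.tail) : x ≠ a := by
  cases l with
  | nil => simp at ha
  | cons c t =>
    simp only [List.head?_cons, Option.some_inj] at ha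
    subst ha
    rintro rfl
    exact (List.nodup_cons.1 h).1 hx

lemma adjac_of_head {l : List V} (hnd : l.Nodup) {u v : V} (h : Adjac l u v)
    (hu : l.head? = some u) : ∃ l2, l = u :: v :: l2 := by
  obtain ⟨l1, l2, rfl⟩ := h
  cases l1 with
  | nil => exact ⟨l2, rfl⟩
  | cons a t =>
    exfalso
    simp only [List.cons_append, List.head?_cons, Option.some_inj] at hu
    subst hu
    rw [List.cons_append, List.nodup_cons] at hnd
    exact hnd.1 (by simp)

lemma adjac_of_getLast {l : List V} (hnd : l.Nodup) {u v : V} (h : Adjac l u v)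
    (hv : l.getLast? = some v) : ∃ l1, l = l1 ++ [u, v] := by
  obtain ⟨l1, l2, rfl⟩ := h
  cases l2 with
  | nil => exact ⟨l1, rfl⟩
  | cons c t =>
    exfalso
    have h1 : (l1 ++ u :: v :: c :: t).getLast? = (c :: t).getLast? := by
      rw [show l1 ++ u :: v :: c :: t = (l1 ++ [u, v]) ++ c :: t by simp]
      exact List.getLast?_append_cons _ _ _
    rw [hv] at h1
    have hvm : v ∈ c :: t := by
      obtain ⟨h9, hv9⟩ := List.mem_getLast?_eq_getLast (show v ∈ (c :: t).getLast? from h1.symm)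
      rw [hv9]
      exact List.getLast_mem h9
    have : (v :: c :: t).Nodup := by
      have := hnd
      rw [show l1 ++ u :: v :: c :: t = (l1 ++ [u]) ++ v :: c :: t by simp] at this
      exact (List.nodup_append.1 this).2.1
    exact (List.nodup_cons.1 this).1 hvm

lemma adjac_pair {a b u y : V} (h : Adjac [a, b] u y) : u = a ∧ y = b := by
  obtain ⟨l1, l2, heq⟩ := h
  have hlen : l1.length + (l2.length + 2) = 2 := by
    have := congrArg List.length heq
    simpa [List.length_append, Nat.add_comm, Nat.add_assoc, Nat.add_left_comm] using this.symm
  have h1 : l1.length = 0 := by omega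
  have h2 : l2.length = 0 := by omega
  rw [List.length_eq_zero_iff] at h1 h2
  subst h1; subst h2
  simp at heq
  exact ⟨heq.1.symm, heq.2.symm⟩

end AdjacLemmas

section Forward
variable {V : Type*} [Fintype V] {R : V → V → Prop}

lemma isLf_no_child (h : IsLf R u) {y : V} (hy : R u y) : False := by
  have h0 : {y | R u y} = ∅ := (Set.ncard_eq_zero (Set.toFinite _)).1 h
  have h2 : y ∈ ({y | R u y} : Set V) := hy
  rw [h0] at h2
  exact h2

lemma leaf_parent (hphy : IsPhyloNet R) {a : V} (h : IsLf R a) : ∃ p, R p a := by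
  rcases hphy.2.2 a with ⟨_, h2⟩ | ⟨h1, h2⟩ | ⟨h1, h2⟩ | ⟨h1, _⟩
  · exact absurd (h.symm.trans h2) (by norm_num)
  · exact absurd (h.symm.trans h2) (by norm_num)
  · exact absurd (h.symm.trans h2) (by norm_num)
  · obtain ⟨p, hp⟩ := (Set.ncard_eq_one).1 h1
    refine ⟨p, ?_⟩
    have : p ∈ ({u | R u a} : Set V) := by rw [show {u | R u a} = {p} from hp]; rfl
    exact this

theorem no_cutarc_of_simple {k : ℕ} (hsim : SimpleLevel k R) :
    ¬ ∃ u v : V, CutArc R u v ∧ ¬ IsLf R v := by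
  obtain ⟨G, hgen, hphy, φ, ψ, hinj, hch, hnd, hdisj, hnotφ, hleafch, hrecleaf, hcover, harc⟩ :=
    hsim
  obtain ⟨hacy, hroot, hdeg⟩ := hphy
  obtain ⟨hWfin, hEfin, hgacy, hgconn, hg2conn, hgroot, hgk, hgdeg⟩ := hgen
  rintro ⟨u, v, ⟨huv, a0, b0, hdisc⟩, hvnl⟩
  set Pm : V → V → Prop :=
    fun p q => (R p q ∨ R q p) ∧ ¬((p = u ∧ q = v) ∨ (p = v ∧ q = u)) with hPm
  apply hdisc
  clear hdisc
  -- basic facts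
  have hnoRvu : ¬ R v u := fun h => hacy u (TransGen.head huv (TransGen.single h))
  have hPs : ∀ a b, Pm a b → Pm b a := by
    rintro a b ⟨h1, h2⟩
    exact ⟨h1.symm, fun h => h2 (by tauto)⟩
  have hEf : Finite G.E := hEfin
  have hstne : ∀ e : G.E, G.src e ≠ G.tgt e := by
    intro e h
    exact hgacy (G.src e) (TransGen.single ⟨e, rfl, h.symm⟩)
  have hfphead : ∀ e, (fullPath G φ ψ e).head? = some (φ (G.src e)) := fun e => rfl
  have hfplast : ∀ e, (fullPath G φ ψ e).getLast? = some (φ (G.tgt e)) := by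
    intro e
    show (φ (G.src e) :: ψ e ++ [φ (G.tgt e)]).getLast? = _
    rw [show φ (G.src e) :: ψ e ++ [φ (G.tgt e)] = (φ (G.src e) :: ψ e) ++ [φ (G.tgt e)] by simp]
    exact List.getLast?_concat
  have hfptail : ∀ e, (fullPath G φ ψ e).tail = ψ e ++ [φ (G.tgt e)] := fun e => rfl
  have hfpdrop : ∀ e, (fullPath G φ ψ e).dropLast = φ (G.src e) :: ψ e := by
    intro e
    show (φ (G.src e) :: ψ e ++ [φ (G.tgt e)]).dropLast = _
    rw [show φ (G.src e) :: ψ e ++ [φ (G.tgt e)] = (φ (G.src e) :: ψ e) ++ [φ (G.tgt e)] by simp]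
    exact List.dropLast_concat
  have hfpnd : ∀ e, (fullPath G φ ψ e).Nodup := by
    intro e
    show (φ (G.src e) :: ψ e ++ [φ (G.tgt e)]).Nodup
    rw [List.cons_append, List.nodup_cons]
    constructor
    · intro hmem
      rcases List.mem_append.1 hmem with h | h
      · exact hnotφ e _ h (G.src e) rfl
      · exact hstne e (hinj (by simpa using h))
    · rw [List.nodup_append]
      refine ⟨hnd e, by simp, ?_⟩
      intro x hx y hx2
      simp only [List.mem_singleton] at hx2
      exact hx2 ▸ hnotφ e x hx (G.tgt e)
  have hfpmem : ∀ e x, x ∈ fullPath G φ ψ e ↔ (x = φ (G.src e) ∨ x ∈ ψ e ∨ x = φ (G.tgt e)) := by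
    intro e x
    show x ∈ φ (G.src e) :: ψ e ++ [φ (G.tgt e)] ↔ _
    simp
  rcases harc u v huv with ⟨e0, he0⟩ | ⟨hlf, _⟩
  swap
  · exact absurd hlf hvnl
  have huniq : ∀ e, Adjac (fullPath G φ ψ e) u v → e = e0 := by
    have key : ∀ e1 e2, Adjac (fullPath G φ ψ e1) u v →
        Adjac (fullPath G φ ψ e2) u v → e1 = e2 := by
      intro e1 e2 h1 h2
      by_contra hne
      have hv1 : v ∈ ψ e1 ∨ v = φ (G.tgt e1) := by
        have := adjac_mem_tail h1
        rw [hfptail] at this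
        simpa using this
      have hv2 : v ∈ ψ e2 ∨ v = φ (G.tgt e2) := by
        have := adjac_mem_tail h2
        rw [hfptail] at this
        simpa using this
      rcases hv1 with hv1 | hv1
      · rcases hv2 with hv2 | hv2
        · exact hdisj e1 e2 hne v hv1 hv2
        · exact hnotφ e1 v hv1 _ hv2
      rcases hv2 with hv2 | hv2
      · exact hnotφ e2 v hv2 _ hv1
      have hu1 : u ∈ ψ e1 ∨ u = φ (G.src e1) := by
        have := adjac_mem_dropLast h1
        rw [hfpdrop] at this
        rcases List.mem_cons.1 this with h | h
        · exact Or.inr h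
        · exact Or.inl h
      have hu2 : u ∈ ψ e2 ∨ u = φ (G.src e2) := by
        have := adjac_mem_dropLast h2
        rw [hfpdrop] at this
        rcases List.mem_cons.1 this with h | h
        · exact Or.inr h
        · exact Or.inl h
      rcases hu1 with hu1 | hu1
      · rcases hu2 with hu2 | hu2
        · exact hdisj e1 e2 hne u hu1 hu2
        · exact hnotφ e1 u hu1 _ hu2
      rcases hu2 with hu2 | hu2
      · exact hnotφ e2 u hu2 _ hu1
      have hsrc12 : G.src e1 = G.src e2 := hinj (hu1.symm.trans hu2)
      have htgt12 : G.tgt e1 = G.tgt e2 := hinj (hv1.symm.trans hv2)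
      have hpsi : ∀ e, Adjac (fullPath G φ ψ e) u v → u = φ (G.src e) → v = φ (G.tgt e) →
          ψ e = [] := by
        intro e he hue hve
        obtain ⟨l2', hl2⟩ := adjac_of_head (hfpnd e) he (by rw [hfphead e, hue])
        have heq2 : ψ e ++ [φ (G.tgt e)] = v :: l2' := by
          have h3 : φ (G.src e) :: (ψ e ++ [φ (G.tgt e)]) = u :: v :: l2' := hl2
          exact (List.cons.injEq _ _ _ _ ▸ h3 : _ ∧ _).2
        cases hψ : ψ e with
        | nil => rfl
        | cons a t =>
          exfalso
          rw [hψ] at heq2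
          have ha : a = v := by
            have := congrArg List.head? heq2
            simpa using this
          exact hnotφ e v (by rw [hψ, ha] at *; exact List.mem_cons_self) _ hve
      have hψ1 : ψ e1 = [] := hpsi e1 h1 hu1 hv1
      have hψ2 : ψ e2 = [] := hpsi e2 h2 hu2 hv2
      have hsubp : ({e1, e2} : Set G.E) ⊆ {e | G.src e = G.src e1} := by
        rintro x (rfl | rfl)
        · rfl
        · exact hsrc12.symm
      have h2le : 2 ≤ mOutDeg G (G.src e1) := by
        calc (2:ℕ) = ({e1, e2} : Set G.E).ncard := (Set.ncard_pair hne).symm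
        _ ≤ _ := Set.ncard_le_ncard hsubp (Set.toFinite _)
      have hmout : mOutDeg G (G.src e1) = 2 ∧ mInDeg G (G.src e1) ≤ 1 := by
        rcases hgdeg (G.src e1) with ⟨h1', h2'⟩ | ⟨h1', h2'⟩ | ⟨h1', h2'⟩
        · exact ⟨h2', by omega⟩
        · omega
        · exact ⟨h2', by omega⟩
      have houtset : {e | G.src e = G.src e1} = {e1, e2} :=
        (Set.eq_of_subset_of_ncard_le hsubp
          (by rw [show ({e | G.src e = G.src e1} : Set G.E).ncard = mOutDeg G (G.src e1) from rfl,
                hmout.1, Set.ncard_pair hne]) (Set.toFinite _)).symm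
      have hsucc : ∀ y, R u y → y = v := by
        intro y hy
        rcases harc u y hy with ⟨e, he⟩ | ⟨hly, hcase⟩
        · have hud : u ∈ ψ e ∨ u = φ (G.src e) := by
            have := adjac_mem_dropLast he
            rw [hfpdrop] at this
            rcases List.mem_cons.1 this with h | h
            · exact Or.inr h
            · exact Or.inl h
          rcases hud with hud | hud
          · exact absurd hu1 (hnotφ e u hud _)
          have hesrc : G.src e = G.src e1 := hinj (hud.symm.trans hu1)
          have hee : e ∈ ({e1, e2} : Set G.E) := by
            rw [← houtset]
            exact hesrc
          simp only [Set.mem_insert_iff, Set.mem_singleton_iff] at hee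
          have hψe : ψ e = [] := by rcases hee with rfl | rfl <;> assumption
          have htgte : φ (G.tgt e) = v := by
            rcases hee with rfl | rfl
            · exact hv1.symm
            · rw [← htgt12]
              exact hv1.symm
          have hfpe : fullPath G φ ψ e = [u, v] := by
            show φ (G.src e) :: ψ e ++ [φ (G.tgt e)] = [u, v]
            rw [hψe, htgte, hesrc, ← hu1]
            rfl
          rw [hfpe] at he
          exact (adjac_pair he).2
        · rcases hcase with ⟨e, hu'⟩ | ⟨w, hw2, hw0, hu'⟩
          · exact absurd hu1 (hnotφ e u hu' _)
          · have hww : w = G.src e1 := hinj (hu'.symm.trans hu1)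
            rw [hww] at hw0
            omega
      have houtu : outDeg R u ≤ 1 := by
        have hsub : {y | R u y} ⊆ {v} := fun y hy => hsucc y hy
        calc outDeg R u ≤ ({v} : Set V).ncard := Set.ncard_le_ncard hsub (Set.toFinite _)
        _ = 1 := Set.ncard_singleton v
      have hpred : {x | R x u} ⊆
          (fun e => ((φ (G.src e) :: ψ e).getLast?).getD u) '' {e | G.tgt e = G.src e1} := by
        intro x hx
        rcases harc x u hx with ⟨e, he⟩ | ⟨hlu, _⟩
        swap
        · exact (isLf_no_child hlu huv).elim
        · have hut : u ∈ ψ e ∨ u = φ (G.tgt e) := by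
            have := adjac_mem_tail he
            rw [hfptail] at this
            simpa using this
          rcases hut with hut | hut
          · exact absurd hu1 (hnotφ e u hut _)
          have hetgt : G.tgt e = G.src e1 := hinj (hut.symm.trans hu1)
          refine ⟨e, hetgt, ?_⟩
          obtain ⟨l1', hl1⟩ := adjac_of_getLast (hfpnd e) he (by rw [hfplast e, ← hut])
          have hd : (fullPath G φ ψ e).dropLast = l1' ++ [x] := by
            rw [hl1, show l1' ++ [x, u] = (l1' ++ [x]) ++ [u] by simp]
            simp
          rw [hfpdrop] at hd
          show ((φ (G.src e) :: ψ e).getLast?).getD u = x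
          rw [hd]
          simp
      have hinu : inDeg R u ≤ 1 := by
        calc inDeg R u ≤ _ := Set.ncard_le_ncard hpred (Set.toFinite _)
        _ ≤ ({e | G.tgt e = G.src e1}).ncard := Set.ncard_image_le (Set.toFinite _)
        _ = mInDeg G (G.src e1) := rfl
        _ ≤ 1 := hmout.2
      have hone : 1 ≤ outDeg R u := by
        have : (0:ℕ) < outDeg R u := (Set.ncard_pos (Set.toFinite _)).2 ⟨v, huv⟩
        omega
      rcases hdeg u with ⟨h1', h2'⟩ | ⟨h1', h2'⟩ | ⟨h1', h2'⟩ | ⟨h1', h2'⟩ <;> omega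
    exact fun e he => key e e0 he he0
  set Pc : V → V → Prop :=
    fun p q => R p q ∧ ¬((p = u ∧ q = v) ∨ (p = v ∧ q = u)) with hPcdef
  have hPcPm : ∀ p q, Pc p q → Pm p q := fun p q h => ⟨Or.inl h.1, h.2⟩
  have hchPc : ∀ e, e ≠ e0 → List.Chain' Pc (fullPath G φ ψ e) :=
    fun e he => chain'_sub hnoRvu _ (hch e) (fun h => he (huniq e h))
  have connst : ∀ e, e ≠ e0 → ReflTransGen Pm (φ (G.src e)) (φ (G.tgt e)) := by
    intro e he
    have h2 := chain'_rtg_head ((ψ e) ++ [φ (G.tgt e)]) (φ (G.src e)) (hchPc e he)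
      (φ (G.tgt e)) (by simp)
    exact Relation.ReflTransGen.mono hPcPm _ _ h2
  have connmem : ∀ e, e ≠ e0 → ∀ x ∈ fullPath G φ ψ e, ReflTransGen Pm x (φ (G.tgt e)) := by
    intro e he x hx
    exact Relation.ReflTransGen.mono hPcPm _ _ (chain'_rtg_last _ _ (hchPc e he) (hfplast e) x hx)
  obtain ⟨l1, l2, hsp⟩ := he0
  have hfpeq0 : fullPath G φ ψ e0 = (l1 ++ [u]) ++ (v :: l2) := by rw [hsp]; simp
  have hnd0 := hfpnd e0
  rw [hfpeq0] at hnd0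
  have hdisj0 := (List.nodup_append.1 hnd0).2.2
  have hchsplit := List.isChain_append.1 (show List.Chain' R ((l1 ++ [u]) ++ (v :: l2)) by
    rw [← hfpeq0]; exact hch e0)
  have hchpl : List.Chain' Pc (l1 ++ [u]) :=
    chain'_sub hnoRvu _ hchsplit.1 (fun h => hdisj0 _ (adjac_mem₂ h) _ (by simp) rfl)
  have hchsl : List.Chain' Pc (v :: l2) :=
    chain'_sub hnoRvu _ hchsplit.2.1
      (fun h => hdisj0 _ (show u ∈ l1 ++ [u] by simp) _ (adjac_mem₁ h) rfl)
  have hple : (l1 ++ [u]).head? = some (φ (G.src e0)) := by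
    have h5 := hfphead e0
    rw [hfpeq0] at h5
    rwa [List.head?_append_of_ne_nil _ (by simp)] at h5
  have hsle : (v :: l2).getLast? = some (φ (G.tgt e0)) := by
    have h5 := hfplast e0
    rw [hfpeq0] at h5
    rwa [List.getLast?_append_of_ne_nil _ (by simp)] at h5
  have hsplitconn : ∀ x ∈ fullPath G φ ψ e0,
      ReflTransGen Pm x (φ (G.src e0)) ∨ ReflTransGen Pm x (φ (G.tgt e0)) := by
    intro x hx
    rw [hfpeq0, List.mem_append] at hx
    rcases hx with hx | hx
    · left
      obtain ⟨t0, ht0⟩ : ∃ t0, l1 ++ [u] = φ (G.src e0) :: t0 := by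
        cases hq : l1 ++ [u] with
        | nil => simp at hq
        | cons a t =>
          rw [hq] at hple
          simp only [List.head?_cons, Option.some_inj] at hple
          exact ⟨t, by rw [hple]⟩
      rw [ht0] at hchpl hx
      exact rtg_symm hPs (Relation.ReflTransGen.mono hPcPm _ _ (chain'_rtg_head _ _ hchpl x hx))
    · right
      exact Relation.ReflTransGen.mono hPcPm _ _ (chain'_rtg_last _ _ hchsl hsle x hx)
  have hbridge : ReflTransGen (fun p q : G.W => ∃ e, e ≠ e0 ∧
      ((G.src e = p ∧ G.tgt e = q) ∨ (G.src e = q ∧ G.tgt e = p))) (G.src e0) (G.tgt e0) := by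
    obtain ⟨e1, hne1, hinc⟩ : ∃ e1, e1 ≠ e0 ∧ (G.tgt e1 = G.tgt e0 ∨ G.src e1 = G.tgt e0) := by
      rcases hgdeg (G.tgt e0) with ⟨h1', _⟩ | ⟨h1', _⟩ | ⟨h1', h2'⟩
      · exfalso
        have : (0:ℕ) < mInDeg G (G.tgt e0) := (Set.ncard_pos (Set.toFinite _)).2 ⟨e0, rfl⟩
        omega
      · obtain ⟨a, b, hab, hset⟩ := Set.ncard_eq_two.1 h1'
        have he0m : e0 ∈ ({e | G.tgt e = G.tgt e0} : Set G.E) := rfl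
        rw [hset] at he0m
        rcases he0m with rfl | rfl
        · refine ⟨b, fun h => hab h.symm, Or.inl ?_⟩
          have : b ∈ ({e | G.tgt e = G.tgt e0} : Set G.E) := by rw [hset]; simp
          exact this
        · refine ⟨a, fun h => hab h, Or.inl ?_⟩
          have : a ∈ ({e | G.tgt e = G.tgt e0} : Set G.E) := by rw [hset]; simp
          exact this
      · have hpos : (0:ℕ) < ({e | G.src e = G.tgt e0} : Set G.E).ncard := by
          rw [show ({e | G.src e = G.tgt e0} : Set G.E).ncard = mOutDeg G (G.tgt e0) from rfl, h2']
          omega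
        obtain ⟨e1, he1⟩ := (Set.ncard_pos (Set.toFinite _)).1 hpos
        refine ⟨e1, fun h => ?_, Or.inr he1⟩
        rw [h] at he1
        exact hstne e0 (he1 : G.src e0 = G.tgt e0)
    have hstep : ∀ p q : G.W, (p ≠ G.tgt e0 ∧ q ≠ G.tgt e0 ∧ (mAdj G p q ∨ mAdj G q p)) →
        (∃ e, e ≠ e0 ∧ ((G.src e = p ∧ G.tgt e = q) ∨ (G.src e = q ∧ G.tgt e = p))) := by
      rintro p q ⟨hp, hq, ⟨e', hs', ht'⟩ | ⟨e', hs', ht'⟩⟩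
      · exact ⟨e', fun h => hq (by rw [← ht', h]), Or.inl ⟨hs', ht'⟩⟩
      · exact ⟨e', fun h => hp (by rw [← ht', h]), Or.inr ⟨hs', ht'⟩⟩
    rcases hinc with hinc | hinc
    · by_cases hb : G.src e1 = G.src e0
      · exact ReflTransGen.single ⟨e1, hne1, Or.inl ⟨hb, hinc⟩⟩
      · have hb0 : G.src e1 ≠ G.tgt e0 := fun h => hstne e1 (h.trans hinc.symm)
        have h2c := hg2conn (G.tgt e0) (G.src e0) (G.src e1) (hstne e0) hb0
        exact ReflTransGen.tail (Relation.ReflTransGen.mono (fun p q h => hstep p q h) _ _ h2c)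
          ⟨e1, hne1, Or.inl ⟨rfl, hinc⟩⟩
    · by_cases hb : G.tgt e1 = G.src e0
      · exact ReflTransGen.single ⟨e1, hne1, Or.inr ⟨hinc, hb⟩⟩
      · have hb0 : G.tgt e1 ≠ G.tgt e0 := fun h => hstne e1 (hinc.trans h.symm)
        have h2c := hg2conn (G.tgt e0) (G.src e0) (G.tgt e1) (hstne e0) hb0
        exact ReflTransGen.tail (Relation.ReflTransGen.mono (fun p q h => hstep p q h) _ _ h2c)
          ⟨e1, hne1, Or.inr ⟨hinc, rfl⟩⟩
  have hQlift : ∀ (w w' : G.W), ReflTransGen (fun p q : G.W => ∃ e, e ≠ e0 ∧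
      ((G.src e = p ∧ G.tgt e = q) ∨ (G.src e = q ∧ G.tgt e = p))) w w' →
      ReflTransGen Pm (φ w) (φ w') := by
    intro w w' h
    induction h with
    | refl => exact .refl
    | tail _ hstep ih =>
      rcases hstep with ⟨e, hne, ⟨hs, ht⟩ | ⟨hs, ht⟩⟩
      · exact ih.trans (hs ▸ ht ▸ connst e hne)
      · exact ih.trans (rtg_symm hPs (hs ▸ ht ▸ connst e hne))
  have hallφ : ∀ w w' : G.W, ReflTransGen Pm (φ w) (φ w') := by
    intro w w'
    have h := hgconn w w'
    induction h with
    | refl => exact .refl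
    | tail _ hstep ih =>
      refine ih.trans ?_
      rcases hstep with ⟨e, hs, ht⟩ | ⟨e, hs, ht⟩
      · by_cases he : e = e0
        · subst he
          exact hs ▸ ht ▸ hQlift _ _ hbridge
        · exact hs ▸ ht ▸ connst e he
      · by_cases he : e = e0
        · subst he
          exact rtg_symm hPs (hs ▸ ht ▸ hQlift _ _ hbridge)
        · exact rtg_symm hPs (hs ▸ ht ▸ connst e he)
  have toHub2 : ∀ e, ∀ x ∈ ψ e, ReflTransGen Pm x (φ (G.src e0)) := by
    intro e x hx
    by_cases he : e = e0
    · subst he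
      rcases hsplitconn x (by rw [hfpmem]; tauto) with h | h
      · exact h
      · exact h.trans (hallφ _ _)
    · exact (connmem e he x (by rw [hfpmem]; tauto)).trans (hallφ _ _)
  have toHub : ∀ x : V, ReflTransGen Pm x (φ (G.src e0)) := by
    intro x
    rcases hcover x with ⟨w, rfl⟩ | ⟨e, hx⟩ | hlx
    · exact hallφ _ _
    · exact toHub2 e _ hx
    · obtain ⟨p, hp⟩ := leaf_parent ⟨hacy, hroot, hdeg⟩ hlx
      have hstep : Pm x p := by
        refine ⟨Or.inr hp, ?_⟩
        rintro (⟨rfl, rfl⟩ | ⟨rfl, rfl⟩)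
        · exact isLf_no_child hlx huv
        · exact hvnl hlx
      rcases hcover p with ⟨w, rfl⟩ | ⟨e, hpe⟩ | hlp
      · exact ReflTransGen.head hstep (hallφ _ _)
      · exact ReflTransGen.head hstep (toHub2 e _ hpe)
      · exact (isLf_no_child hlp hp).elim
  exact (toHub a0).trans (rtg_symm hPs (toHub b0))

end Forward

section Backward
open Classical
variable {V : Type*}

/-- Generator vertices: root, recombination vertices, and splits with no leaf child. -/
def W0 (R : V → V → Prop) : Set V :=
  {v | inDeg R v = 0 ∨ inDeg R v = 2 ∨ (outDeg R v = 2 ∧ ∀ c, R v c → ¬ IsLf R c)}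

/-- Follow unique non-leaf children until reaching a W0 vertex. -/
noncomputable def nextV (R : V → V → Prop) (hwf : WellFounded (flip R)) : V → V :=
  hwf.fix (fun v rec =>
    if v ∈ W0 R then v
    else if h : ∃ c, R v c ∧ ¬ IsLf R c then rec h.choose h.choose_spec.1 else v)

lemma nextV_eq (R : V → V → Prop) (hwf : WellFounded (flip R)) (v : V) :
    nextV R hwf v = if v ∈ W0 R then v
      else if h : ∃ c, R v c ∧ ¬ IsLf R c then nextV R hwf h.choose else v := by
  exact WellFounded.fix_eq _ _ _

/-- The chain of subdivision vertices starting at `v`. -/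
noncomputable def chainV (R : V → V → Prop) (hwf : WellFounded (flip R)) : V → List V :=
  hwf.fix (fun v rec =>
    if v ∈ W0 R then []
    else if h : ∃ c, R v c ∧ ¬ IsLf R c then v :: rec h.choose h.choose_spec.1 else [v])

lemma chainV_eq (R : V → V → Prop) (hwf : WellFounded (flip R)) (v : V) :
    chainV R hwf v = if v ∈ W0 R then []
      else if h : ∃ c, R v c ∧ ¬ IsLf R c then v :: chainV R hwf h.choose else [v] := by
  exact WellFounded.fix_eq _ _ _

/-- Climb unique parents until reaching a W0 vertex. -/
noncomputable def topV (R : V → V → Prop) (hwf : WellFounded R) : V → V :=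
  hwf.fix (fun v rec =>
    if v ∈ W0 R then v
    else if h : ∃ p, R p v then rec h.choose h.choose_spec else v)

lemma topV_eq (R : V → V → Prop) (hwf : WellFounded R) (v : V) :
    topV R hwf v = if v ∈ W0 R then v
      else if h : ∃ p, R p v then topV R hwf h.choose else v := by
  exact WellFounded.fix_eq _ _ _

noncomputable def eW (R : V → V → Prop) [Finite ↥(W0 R)] :
    ↥(W0 R) ≃ Fin (Finite.exists_equiv_fin ↥(W0 R)).choose :=
  (Finite.exists_equiv_fin ↥(W0 R)).choose_spec.some

/-- Generator edges: arcs out of a W0 vertex towards a non-leaf. -/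
def E0 (R : V → V → Prop) : Set (V × V) :=
  {p | R p.1 p.2 ∧ p.1 ∈ W0 R ∧ ¬ IsLf R p.2}

noncomputable def eE (R : V → V → Prop) [Finite ↥(E0 R)] :
    ↥(E0 R) ≃ Fin (Finite.exists_equiv_fin ↥(E0 R)).choose :=
  (Finite.exists_equiv_fin ↥(E0 R)).choose_spec.some

noncomputable def genG (R : V → V → Prop) [Finite ↥(W0 R)] [Finite ↥(E0 R)]
    (hwf : WellFounded (flip R))
    (hnx : ∀ v : V, ¬ IsLf R v → nextV R hwf v ∈ W0 R) : MultiDigraph where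
  W := Fin (Finite.exists_equiv_fin ↥(W0 R)).choose
  E := Fin (Finite.exists_equiv_fin ↥(E0 R)).choose
  src := fun i => eW R ⟨((eE R).symm i).val.1, ((eE R).symm i).prop.2.1⟩
  tgt := fun i => eW R ⟨nextV R hwf ((eE R).symm i).val.2, hnx _ ((eE R).symm i).prop.2.2⟩

lemma ncard_equiv_image {α β : Type*} (f : α ≃ β) (s : Set α) :
    (f '' s).ncard = s.ncard :=
  Set.ncard_image_of_injective s f.injective

end Backward



section BackLemmas
open Relation
variable {V : Type*} [Fintype V] {R : V → V → Prop}

lemma outDeg_one_spec {v : V} (h : outDeg R v = 1) : ∃ c, R v c ∧ ∀ y, R v y → y = c := by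
  obtain ⟨c, hc⟩ := Set.ncard_eq_one.1 h
  refine ⟨c, ?_, ?_⟩
  · have : c ∈ {y | R v y} := by rw [hc]; rfl
    exact this
  · intro y hy
    have : y ∈ ({c} : Set V) := hc ▸ hy
    exact this

lemma outDeg_two_spec {v : V} (h : outDeg R v = 2) :
    ∃ c1 c2, c1 ≠ c2 ∧ R v c1 ∧ R v c2 ∧ ∀ y, R v y → y = c1 ∨ y = c2 := by
  obtain ⟨c1, c2, hne, hc⟩ := Set.ncard_eq_two.1 h
  refine ⟨c1, c2, hne, ?_, ?_, ?_⟩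
  · have : c1 ∈ {y | R v y} := by rw [hc]; simp
    exact this
  · have : c2 ∈ {y | R v y} := by rw [hc]; simp
    exact this
  · intro y hy
    have : y ∈ ({c1, c2} : Set V) := hc ▸ hy
    simpa using this

lemma inDeg_zero_spec {v : V} (h : inDeg R v = 0) : ∀ y, ¬ R y v := by
  intro y hy
  have h0 : {u | R u v} = ∅ := (Set.ncard_eq_zero (Set.toFinite _)).1 h
  have : y ∈ ({u | R u v} : Set V) := hy
  rw [h0] at this
  exact this

lemma inDeg_one_spec {v : V} (h : inDeg R v = 1) : ∃ p, R p v ∧ ∀ y, R y v → y = p := by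
  obtain ⟨p, hp⟩ := Set.ncard_eq_one.1 h
  refine ⟨p, ?_, ?_⟩
  · have : p ∈ {u | R u v} := by rw [hp]; rfl
    exact this
  · intro y hy
    have : y ∈ ({p} : Set V) := hp ▸ hy
    exact this

lemma inDeg_two_spec {v : V} (h : inDeg R v = 2) :
    ∃ p1 p2, p1 ≠ p2 ∧ R p1 v ∧ R p2 v ∧ ∀ y, R y v → y = p1 ∨ y = p2 := by
  obtain ⟨p1, p2, hne, hp⟩ := Set.ncard_eq_two.1 h
  refine ⟨p1, p2, hne, ?_, ?_, ?_⟩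
  · have : p1 ∈ {u | R u v} := by rw [hp]; simp
    exact this
  · have : p2 ∈ {u | R u v} := by rw [hp]; simp
    exact this
  · intro y hy
    have : y ∈ ({p1, p2} : Set V) := hp ▸ hy
    simpa using this

lemma not_isLf_spec {v : V} (h : ¬ IsLf R v) : ∃ c, R v c := by
  by_contra hc
  push_neg at hc
  exact h ((Set.ncard_eq_zero (Set.toFinite _)).2 (by ext y; simpa using hc y))

lemma no2cyc (hacy : ∀ v, ¬ TransGen R v v) {a b : V} (hab : R a b) (hba : R b a) : False :=
  hacy a (TransGen.head hab (TransGen.single hba))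

lemma neq_of_R (hacy : ∀ v, ¬ TransGen R v v) {a b : V} (hab : R a b) : a ≠ b :=
  fun h => hacy a (TransGen.single (h ▸ hab))

lemma parent_not_isLf {p c : V} (hpc : R p c) : ¬ IsLf R p :=
  fun h => isLf_no_child h hpc

lemma leaf_inDeg_one (hphy : IsPhyloNet R) {v : V} (h : IsLf R v) : inDeg R v = 1 := by
  rcases hphy.2.2 v with ⟨h1, h2⟩ | ⟨h1, h2⟩ | ⟨h1, h2⟩ | ⟨h1, h2⟩ <;>
    first | exact h1 | (exfalso; rw [IsLf] at h; omega)

lemma root_out2 (hphy : IsPhyloNet R) {r : V} (hr : inDeg R r = 0) : outDeg R r = 2 := by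
  rcases hphy.2.2 r with ⟨h1, h2⟩ | ⟨h1, h2⟩ | ⟨h1, h2⟩ | ⟨h1, h2⟩ <;> omega

lemma nonroot_has_parent (hphy : IsPhyloNet R) {r v : V}
    (hru : ∀ x, inDeg R x = 0 → x = r) (hv : v ≠ r) : ∃ p, R p v := by
  rcases hphy.2.2 v with ⟨h1, h2⟩ | ⟨h1, h2⟩ | ⟨h1, h2⟩ | ⟨h1, h2⟩
  · exact absurd (hru v h1) hv
  · obtain ⟨p, hp, _⟩ := inDeg_one_spec h1
    exact ⟨p, hp⟩
  · obtain ⟨p1, p2, _, hp1, _⟩ := inDeg_two_spec h1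
    exact ⟨p1, hp1⟩
  · obtain ⟨p, hp, _⟩ := inDeg_one_spec h1
    exact ⟨p, hp⟩

lemma nonroot_has_parent' (hphy : IsPhyloNet R) {r v : V}
    (hru : ∀ x, inDeg R x = 0 → x = r) (hv : v ≠ r) : ∃ p, R p v := by
  exact nonroot_has_parent hphy hru hv

lemma reach_root (hphy : IsPhyloNet R) {r : V}
    (hru : ∀ x, inDeg R x = 0 → x = r) : ∀ v, ReflTransGen R r v := by
  have hwf : WellFounded R := wf_of_acyclic hphy.1
  intro v
  induction v using hwf.induction with
  | _ v ih =>
    by_cases hv : v = r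
    · exact hv ▸ ReflTransGen.refl
    · obtain ⟨p, hp⟩ := nonroot_has_parent hphy hru hv
      exact ReflTransGen.tail (ih p hp) hp

lemma cutarc_of_closed {p q : V} (a b : V) (hpq : R p q) (A : Set V) (haA : a ∈ A) (hbA : b ∉ A)
    (hcl : ∀ x ∈ A, ∀ y,
      ((R x y ∨ R y x) ∧ ¬((x = p ∧ y = q) ∨ (x = q ∧ y = p))) → y ∈ A) :
    CutArc R p q :=
  ⟨hpq, a, b, fun h => hbA (rtg_closed A hcl h haA)⟩

lemma no_split_two_leaves (hphy : IsPhyloNet R) (hnc : ∀ a b, CutArc R a b → IsLf R b)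
    {v c1 c2 : V} (hin : inDeg R v = 1) (hc1 : R v c1) (hc2 : R v c2) (hne : c1 ≠ c2)
    (hl1 : IsLf R c1) (hl2 : IsLf R c2) : False := by
  have hacy := hphy.1
  obtain ⟨p, hp, hpu⟩ := inDeg_one_spec hin
  have hvnl : ¬ IsLf R v := parent_not_isLf hc1
  have hout2 : outDeg R v = 2 := by
    rcases hphy.2.2 v with ⟨h1, h2⟩ | ⟨h1, h2⟩ | ⟨h1, h2⟩ | ⟨h1, h2⟩ <;>
      first | omega | (exfalso; exact hvnl h2)
  have hchAll : ∀ y, R v y → y = c1 ∨ y = c2 := by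
    obtain ⟨d1, d2, hdne, hd1, hd2, hall⟩ := outDeg_two_spec hout2
    have hsub : ({c1, c2} : Set V) ⊆ {y | R v y} := by
      rintro x (rfl | rfl)
      · exact hc1
      · exact hc2
    have heq : {y | R v y} = {c1, c2} :=
      (Set.eq_of_subset_of_ncard_le hsub (by rw [show ({y | R v y} : Set V).ncard = outDeg R v
          from rfl, hout2, Set.ncard_pair hne]) (Set.toFinite _)).symm
    intro y hy
    have : y ∈ ({c1, c2} : Set V) := heq ▸ hy
    simpa using this
  have hcut : CutArc R p v := by
    refine cutarc_of_closed v p hp {v, c1, c2} (by simp) ?_ ?_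
    · intro hmem
      simp only [Set.mem_insert_iff, Set.mem_singleton_iff] at hmem
      rcases hmem with rfl | rfl | rfl
      · exact neq_of_R hacy hp rfl
      · exact isLf_no_child hl1 hp
      · exact isLf_no_child hl2 hp
    · intro x hx y ⟨hor, hnp⟩
      simp only [Set.mem_insert_iff, Set.mem_singleton_iff] at hx ⊢
      rcases hx with rfl | rfl | rfl
      · rcases hor with h | h
        · rcases hchAll y h with rfl | rfl <;> simp
        · exact absurd (Or.inr ⟨rfl, hpu y h⟩) hnp
      · rcases hor with h | h
        · exact (isLf_no_child hl1 h).elim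
        · obtain ⟨pc, hpc, hpcu⟩ := inDeg_one_spec (leaf_inDeg_one hphy hl1)
          left
          rw [hpcu y h, ← hpcu v hc1]
      · rcases hor with h | h
        · exact (isLf_no_child hl2 h).elim
        · obtain ⟨pc, hpc, hpcu⟩ := inDeg_one_spec (leaf_inDeg_one hphy hl2)
          left
          rw [hpcu y h, ← hpcu v hc2]
  exact hvnl (hnc _ _ hcut)

lemma exists_recomb {k : ℕ} (hstrict : ¬ LevelK (k - 1) R) : ∃ v, inDeg R v = 2 := by
  rw [LevelK] at hstrict
  push_neg at hstrict
  obtain ⟨S, _, hS⟩ := hstrict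
  have : ({v ∈ S | inDeg R v = 2}).Nonempty := by
    rw [← Set.ncard_pos (Set.toFinite _)]
    omega
  obtain ⟨v, _, hv⟩ := this
  exact ⟨v, hv⟩

lemma root_child_not_isLf (hphy : IsPhyloNet R) (hnc : ∀ a b, CutArc R a b → IsLf R b)
    (hrec : ∃ v, inDeg R v = 2) {r c : V} (hr : inDeg R r = 0)
    (hru : ∀ x, inDeg R x = 0 → x = r) (hc : R r c) : ¬ IsLf R c := by
  intro hlc
  have hacy := hphy.1
  obtain ⟨c1, c2, hne12, hc1, hc2, hall⟩ := outDeg_two_spec (root_out2 hphy hr)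
  -- wlog c = c1
  have hcases : ∃ c', c' ≠ c ∧ R r c' ∧ ∀ y, R r y → y = c ∨ y = c' := by
    rcases hall c hc with rfl | rfl
    · exact ⟨c2, hne12.symm, hc2, hall⟩
    · exact ⟨c1, hne12, hc1, fun y hy => (hall y hy).symm⟩
  obtain ⟨c', hne, hc', hall'⟩ := hcases
  by_cases hlc' : IsLf R c'
  · -- whole graph is {r, c, c'} but there is a recombination vertex
    obtain ⟨w, hw⟩ := hrec
    have hwA : w ∈ ({r, c, c'} : Set V) := by
      refine rtg_closed _ ?_ (reach_root hphy hru w) (by simp)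
      intro x hx y hy
      simp only [Set.mem_insert_iff, Set.mem_singleton_iff] at hx ⊢
      rcases hx with rfl | rfl | rfl
      · rcases hall' y hy with rfl | rfl <;> simp
      · exact (isLf_no_child hlc hy).elim
      · exact (isLf_no_child hlc' hy).elim
    simp only [Set.mem_insert_iff, Set.mem_singleton_iff] at hwA
    rcases hwA with rfl | rfl | rfl
    · omega
    · have := leaf_inDeg_one hphy hlc
      omega
    · have := leaf_inDeg_one hphy hlc'
      omega
  · -- (r, c') is a nontrivial cut arc
    refine hlc' (hnc r c' ?_)
    refine cutarc_of_closed r c' hc' {r, c} (by simp) ?_ ?_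
    · intro hmem
      simp only [Set.mem_insert_iff, Set.mem_singleton_iff] at hmem
      rcases hmem with rfl | rfl
      · exact neq_of_R hacy hc' rfl
      · exact hne rfl
    · intro x hx y ⟨hor, hnp⟩
      simp only [Set.mem_insert_iff, Set.mem_singleton_iff] at hx ⊢
      rcases hx with rfl | rfl
      · rcases hor with h | h
        · rcases hall' y h with rfl | rfl
          · simp
          · exact absurd (Or.inl ⟨rfl, rfl⟩) hnp
        · exact (inDeg_zero_spec hr y h).elim
      · rcases hor with h | h
        · exact (isLf_no_child hlc h).elim
        · obtain ⟨pc, hpc, hpcu⟩ := inDeg_one_spec (leaf_inDeg_one hphy hlc)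
          left
          rw [hpcu y h, ← hpcu r hc]

lemma W0_not_isLf (hphy : IsPhyloNet R) {v : V} (hv : v ∈ W0 R) : ¬ IsLf R v := by
  intro hl
  rw [IsLf] at hl
  rcases hv with h | h | ⟨h, _⟩
  · have := root_out2 hphy h
    omega
  · rcases hphy.2.2 v with ⟨h1, h2⟩ | ⟨h1, h2⟩ | ⟨h1, h2⟩ | ⟨h1, h2⟩ <;> omega
  · omega

lemma subdiv_struct (hphy : IsPhyloNet R) (hnc : ∀ a b, CutArc R a b → IsLf R b)
    {v : V} (hv : v ∉ W0 R) (hnl : ¬ IsLf R v) :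
    inDeg R v = 1 ∧ ∃ ℓ c, IsLf R ℓ ∧ ¬ IsLf R c ∧ R v ℓ ∧ R v c ∧
      (∀ y, R v y → y = ℓ ∨ y = c) := by
  rw [W0, Set.mem_setOf_eq] at hv
  push_neg at hv
  have hin1 : inDeg R v = 1 := by
    rcases hphy.2.2 v with ⟨h1, h2⟩ | ⟨h1, h2⟩ | ⟨h1, h2⟩ | ⟨h1, h2⟩ <;>
      first | omega | (exfalso; exact hv.1 h1) | (exfalso; exact hv.2.1 h1)
  have hout2 : outDeg R v = 2 := by
    rcases hphy.2.2 v with ⟨h1, h2⟩ | ⟨h1, h2⟩ | ⟨h1, h2⟩ | ⟨h1, h2⟩ <;>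
      first | omega | (exfalso; exact hv.1 h1) | (exfalso; exact hv.2.1 h1) |
        (exfalso; exact hnl h2)
  obtain ⟨ℓ, hℓR, hℓleaf⟩ := hv.2.2 hout2
  obtain ⟨c1, c2, hne12, hc1, hc2, hall⟩ := outDeg_two_spec hout2
  have hcases : ∃ c, c ≠ ℓ ∧ R v c ∧ ∀ y, R v y → y = ℓ ∨ y = c := by
    rcases hall ℓ hℓR with rfl | rfl
    · exact ⟨c2, hne12.symm, hc2, hall⟩
    · exact ⟨c1, hne12, hc1, fun y hy => (hall y hy).symm⟩
  obtain ⟨c, hcne, hcR, hall'⟩ := hcases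
  refine ⟨hin1, ℓ, c, hℓleaf, ?_, hℓR, hcR, hall'⟩
  intro hlc
  exact no_split_two_leaves hphy hnc hin1 hℓR hcR (fun h => hcne h.symm) hℓleaf hlc

lemma subStep_det (hphy : IsPhyloNet R) (hnc : ∀ a b, CutArc R a b → IsLf R b)
    {v c c' : V} (hv : v ∉ W0 R) (hnl : ¬ IsLf R v) (hc : R v c) (hcnl : ¬ IsLf R c)
    (hc' : R v c') (hcnl' : ¬ IsLf R c') : c = c' := by
  obtain ⟨_, ℓ, d, hℓ, hd, _, _, hall⟩ := subdiv_struct hphy hnc hv hnl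
  rcases hall c hc with rfl | rfl
  · exact absurd hℓ hcnl
  rcases hall c' hc' with rfl | rfl
  · exact absurd hℓ hcnl'
  · rfl

end BackLemmas

/-- Subdivision step relation. -/
def subR (R : V → V → Prop) : V → V → Prop :=
  fun p q => R p q ∧ q ∉ W0 R ∧ ¬ IsLf R q

section ChainLemmas
open Relation
variable {V : Type*} [Fintype V] {R : V → V → Prop} (hwf : WellFounded (flip R))

lemma nextV_spec (hphy : IsPhyloNet R) (hnc : ∀ a b, CutArc R a b → IsLf R b) :
    ∀ v, ¬ IsLf R v → nextV R hwf v ∈ W0 R ∧ ¬ IsLf R (nextV R hwf v) ∧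
      ReflTransGen R v (nextV R hwf v) := by
  intro v
  induction v using hwf.induction with
  | _ v ih =>
    intro hnl
    by_cases hv : v ∈ W0 R
    · rw [nextV_eq, if_pos hv]
      exact ⟨hv, hnl, .refl⟩
    · obtain ⟨_, ℓ, c, hℓ, hcnl, hℓR, hcR, hall⟩ := subdiv_struct hphy hnc hv hnl
      have hex : ∃ c, R v c ∧ ¬ IsLf R c := ⟨c, hcR, hcnl⟩
      have hch := hex.choose_spec
      rw [nextV_eq, if_neg hv, dif_pos hex]
      have h2 := ih hex.choose hch.1 hch.2
      exact ⟨h2.1, h2.2.1, ReflTransGen.head hch.1 h2.2.2⟩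

lemma chainV_of_W0 {v : V} (hv : v ∈ W0 R) : chainV R hwf v = [] := by
  rw [chainV_eq, if_pos hv]

lemma nextV_of_W0 {v : V} (hv : v ∈ W0 R) : nextV R hwf v = v := by
  rw [nextV_eq, if_pos hv]

lemma chainV_of_sub {v : V} (hv : v ∉ W0 R) (hex : ∃ c, R v c ∧ ¬ IsLf R c) :
    chainV R hwf v = v :: chainV R hwf hex.choose ∧
      nextV R hwf v = nextV R hwf hex.choose := by
  constructor
  · rw [chainV_eq, if_neg hv, dif_pos hex]
  · rw [nextV_eq, if_neg hv, dif_pos hex]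

lemma chainV_mem_spec (hphy : IsPhyloNet R) (hnc : ∀ a b, CutArc R a b → IsLf R b) :
    ∀ v, ¬ IsLf R v → ∀ x ∈ chainV R hwf v,
      x ∉ W0 R ∧ ¬ IsLf R x ∧ ReflTransGen (subR R) v x ∧
        nextV R hwf x = nextV R hwf v := by
  intro v
  induction v using hwf.induction with
  | _ v ih =>
    intro hnl x hx
    by_cases hv : v ∈ W0 R
    · rw [chainV_of_W0 hwf hv] at hx
      simp at hx
    · obtain ⟨_, ℓ, c, hℓ, hcnl, hℓR, hcR, hall⟩ := subdiv_struct hphy hnc hv hnl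
      have hex : ∃ c, R v c ∧ ¬ IsLf R c := ⟨c, hcR, hcnl⟩
      have hch := hex.choose_spec
      rw [(chainV_of_sub hwf hv hex).1] at hx
      rcases List.mem_cons.1 hx with rfl | hx
      · exact ⟨hv, hnl, .refl, rfl⟩
      · have hcw : hex.choose ∉ W0 R := by
          intro hw
          rw [chainV_of_W0 hwf hw] at hx
          simp at hx
        obtain ⟨h1, h2, h3, h4⟩ := ih hex.choose hch.1 hch.2 x hx
        exact ⟨h1, h2, ReflTransGen.head ⟨hch.1, hcw, hch.2⟩ h3,
          h4.trans (chainV_of_sub hwf hv hex).2.symm⟩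

lemma subR_rtg_R {a b : V} (h : ReflTransGen (subR R) a b) : ReflTransGen R a b :=
  Relation.ReflTransGen.mono (fun _ _ hh => hh.1) _ _ h

lemma chainV_nodup (hphy : IsPhyloNet R) (hnc : ∀ a b, CutArc R a b → IsLf R b) :
    ∀ v, (chainV R hwf v).Nodup := by
  intro v
  induction v using hwf.induction with
  | _ v ih =>
    by_cases hv : v ∈ W0 R
    · rw [chainV_of_W0 hwf hv]
      simp
    · by_cases hex : ∃ c, R v c ∧ ¬ IsLf R c
      · have hch := hex.choose_spec
        rw [(chainV_of_sub hwf hv hex).1, List.nodup_cons]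
        refine ⟨?_, ih hex.choose hch.1⟩
        intro hmem
        have hnl : ¬ IsLf R hex.choose := hch.2
        have hsp := chainV_mem_spec hwf hphy hnc hex.choose hnl v hmem
        exact hphy.1 v (TransGen.head' hch.1 (subR_rtg_R hsp.2.2.1))
      · rw [chainV_eq, if_neg hv, dif_neg hex]
        simp

lemma chain_fullpath (hphy : IsPhyloNet R) (hnc : ∀ a b, CutArc R a b → IsLf R b) :
    ∀ b, ¬ IsLf R b → ∀ a, R a b →
      List.Chain' R ((a :: chainV R hwf b) ++ [nextV R hwf b]) := by
  intro b
  induction b using hwf.induction with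
  | _ b ih =>
    intro hnl a hab
    by_cases hb : b ∈ W0 R
    · rw [chainV_of_W0 hwf hb, nextV_of_W0 hwf hb]
      simp [List.Chain', hab]
    · obtain ⟨_, ℓ, c, hℓ, hcnl, hℓR, hcR, hall⟩ := subdiv_struct hphy hnc hb hnl
      have hex : ∃ c, R b c ∧ ¬ IsLf R c := ⟨c, hcR, hcnl⟩
      have hch := hex.choose_spec
      rw [(chainV_of_sub hwf hb hex).1, (chainV_of_sub hwf hb hex).2]
      have h2 := ih hex.choose hch.1 hch.2 b hch.1
      rw [List.cons_append] at h2 ⊢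
      rw [List.cons_append]
      exact List.isChain_cons_cons.2 ⟨hab, by rw [← List.cons_append]; exact h2⟩

lemma chain'_concat_rel {P : V → V → Prop} {l : List V} {x : V}
    (h : List.Chain' P (l ++ [x])) (hl : l ≠ []) :
    ∃ y, l.getLast? = some y ∧ P y x := by
  have h3 := (List.isChain_append.1 h).2.2
  exact ⟨l.getLast hl, List.getLast?_eq_getLast_of_ne_nil hl,
    h3 _ (List.getLast?_eq_getLast_of_ne_nil hl) x rfl⟩

lemma topV_spec (hphy : IsPhyloNet R) (hnc : ∀ a b, CutArc R a b → IsLf R b)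
    (hwf2 : WellFounded R) :
    ∀ v, ¬ IsLf R v → v ∉ W0 R →
      topV R hwf2 v ∈ W0 R ∧ ∃ b, R (topV R hwf2 v) b ∧ b ∉ W0 R ∧ ¬ IsLf R b ∧
        ReflTransGen (subR R) b v := by
  intro v
  induction v using hwf2.induction with
  | _ v ih =>
    intro hnl hv
    obtain ⟨hin1, _⟩ := subdiv_struct hphy hnc hv hnl
    obtain ⟨p, hp, hpu⟩ := inDeg_one_spec hin1
    have hex : ∃ p, R p v := ⟨p, hp⟩
    have hpc : hex.choose = p := hpu _ hex.choose_spec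
    rw [topV_eq, if_neg hv, dif_pos hex, hpc]
    by_cases hpw : p ∈ W0 R
    · rw [topV_eq, if_pos hpw]
      exact ⟨hpw, v, hp, hv, hnl, .refl⟩
    · have hpnl : ¬ IsLf R p := parent_not_isLf hp
      obtain ⟨h1, b, hb1, hb2, hb3, hb4⟩ := ih p hp hpnl hpw
      exact ⟨h1, b, hb1, hb2, hb3, hb4.tail ⟨hp, hv, hnl⟩⟩

lemma sub_anc (hphy : IsPhyloNet R) (hnc : ∀ a b, CutArc R a b → IsLf R b) :
    ∀ x b b', ReflTransGen (subR R) b x → ReflTransGen (subR R) b' x →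
      ReflTransGen (subR R) b b' ∨ ReflTransGen (subR R) b' b := by
  have hwf2 : WellFounded R := wf_of_acyclic hphy.1
  intro x
  induction x using hwf2.induction with
  | _ x ih =>
    intro b b' h1 h2
    rcases h1.cases_tail with heq | ⟨c, hc, hcx⟩
    · exact Or.inr (heq ▸ h2)
    rcases h2.cases_tail with heq | ⟨c', hc', hcx'⟩
    · exact Or.inl (heq ▸ h1)
    obtain ⟨hin1, _⟩ := subdiv_struct hphy hnc hcx.2.1 hcx.2.2
    obtain ⟨p, hp, hpu⟩ := inDeg_one_spec hin1
    have hcc : c = c' := by rw [hpu c hcx.1, hpu c' hcx'.1]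
    subst hcc
    exact ih c hcx.1 b b' hc hc'

lemma chain_head {v : V} (hv : v ∉ W0 R) : ∃ tl, chainV R hwf v = v :: tl := by
  by_cases hex : ∃ c, R v c ∧ ¬ IsLf R c
  · exact ⟨_, (chainV_of_sub hwf hv hex).1⟩
  · rw [chainV_eq, if_neg hv, dif_neg hex]
    exact ⟨[], rfl⟩

lemma nextV_sub_invariant (hphy : IsPhyloNet R) (hnc : ∀ a b, CutArc R a b → IsLf R b) :
    ∀ x, x ∉ W0 R → ¬ IsLf R x → ∀ y, ReflTransGen (subR R) x y →
      nextV R hwf x = nextV R hwf y := by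
  intro x
  induction x using hwf.induction with
  | _ x ih =>
    intro hx hnl y h
    rcases h.cases_head with rfl | ⟨z, hstep, hrest⟩
    · rfl
    · have hex : ∃ c, R x c ∧ ¬ IsLf R c := ⟨z, hstep.1, hstep.2.2⟩
      have hzc : hex.choose = z :=
        subStep_det hphy hnc hx hnl hex.choose_spec.1 hex.choose_spec.2 hstep.1 hstep.2.2
      rw [(chainV_of_sub hwf hx hex).2, hzc]
      exact ih z hstep.1 hstep.2.1 hstep.2.2 y hrest

lemma chain_mem_of_sub (hphy : IsPhyloNet R) (hnc : ∀ a b, CutArc R a b → IsLf R b) :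
    ∀ b v, b ∉ W0 R → ¬ IsLf R b → ReflTransGen (subR R) b v → v ∈ chainV R hwf b := by
  intro b
  induction b using hwf.induction with
  | _ b ih =>
    intro v hb hnl h
    rcases h.cases_head with rfl | ⟨z, hstep, hrest⟩
    · obtain ⟨tl, htl⟩ := chain_head hwf hb
      rw [htl]
      simp
    · have hex : ∃ c, R b c ∧ ¬ IsLf R c := ⟨z, hstep.1, hstep.2.2⟩
      have hzc : hex.choose = z :=
        subStep_det hphy hnc hb hnl hex.choose_spec.1 hex.choose_spec.2 hstep.1 hstep.2.2
      rw [(chainV_of_sub hwf hb hex).1]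
      right
      rw [hzc]
      exact ih z hstep.1 v hstep.2.1 hstep.2.2 hrest

lemma chain_getLast (hphy : IsPhyloNet R) (hnc : ∀ a b, CutArc R a b → IsLf R b) :
    ∀ b p, b ∉ W0 R → ¬ IsLf R b → ReflTransGen (subR R) b p →
      (∀ c, R p c → ¬ IsLf R c → c ∈ W0 R) →
      (chainV R hwf b).getLast? = some p := by
  intro b
  induction b using hwf.induction with
  | _ b ih =>
    intro p hb hnl h hend
    rcases h.cases_head with rfl | ⟨z, hstep, hrest⟩
    · have hnoex : ¬ ∃ c, R b c ∧ ¬ IsLf R c ∧ c ∉ W0 R := by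
        rintro ⟨c, h1, h2, h3⟩
        exact h3 (hend c h1 h2)
      by_cases hex : ∃ c, R b c ∧ ¬ IsLf R c
      · have hcw : hex.choose ∈ W0 R := hend _ hex.choose_spec.1 hex.choose_spec.2
        rw [(chainV_of_sub hwf hb hex).1, chainV_of_W0 hwf hcw]
        rfl
      · rw [chainV_eq, if_neg hb, dif_neg hex]
        rfl
    · have hex : ∃ c, R b c ∧ ¬ IsLf R c := ⟨z, hstep.1, hstep.2.2⟩
      have hzc : hex.choose = z :=
        subStep_det hphy hnc hb hnl hex.choose_spec.1 hex.choose_spec.2 hstep.1 hstep.2.2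
      rw [(chainV_of_sub hwf hb hex).1, hzc]
      obtain ⟨tl, htl⟩ := chain_head hwf hstep.2.1
      have h2 := ih z hstep.1 p hstep.2.1 hstep.2.2 hrest hend
      rw [htl] at h2 ⊢
      rw [List.getLast?_cons_cons]
      exact h2

lemma chain_pair (hphy : IsPhyloNet R) (hnc : ∀ a b, CutArc R a b → IsLf R b) :
    ∀ b0 a b, b0 ∉ W0 R → ¬ IsLf R b0 → ReflTransGen (subR R) b0 a → subR R a b →
      ∃ l1 l2, chainV R hwf b0 = l1 ++ a :: b :: l2 := by
  intro b0
  induction b0 using hwf.induction with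
  | _ b0 ih =>
    intro a b hb0 hnl h hab
    rcases h.cases_head with rfl | ⟨z, hstep, hrest⟩
    · have hex : ∃ c, R b0 c ∧ ¬ IsLf R c := ⟨b, hab.1, hab.2.2⟩
      have hbc : hex.choose = b :=
        subStep_det hphy hnc hb0 hnl hex.choose_spec.1 hex.choose_spec.2 hab.1 hab.2.2
      obtain ⟨tl, htl⟩ := chain_head hwf hab.2.1
      refine ⟨[], tl, ?_⟩
      rw [(chainV_of_sub hwf hb0 hex).1, hbc, htl]
      rfl
    · have hex : ∃ c, R b0 c ∧ ¬ IsLf R c := ⟨z, hstep.1, hstep.2.2⟩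
      have hzc : hex.choose = z :=
        subStep_det hphy hnc hb0 hnl hex.choose_spec.1 hex.choose_spec.2 hstep.1 hstep.2.2
      obtain ⟨l1, l2, hl⟩ := ih z hstep.1 a b hstep.2.1 hstep.2.2 hrest hab
      refine ⟨b0 :: l1, l2, ?_⟩
      rw [(chainV_of_sub hwf hb0 hex).1, hzc, hl]
      rfl

lemma chains_disjoint (hphy : IsPhyloNet R) (hnc : ∀ a b, CutArc R a b → IsLf R b)
    {a b a' b' : V} (ha : a ∈ W0 R) (ha' : a' ∈ W0 R) (hab : R a b) (hnb : ¬ IsLf R b)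
    (hab' : R a' b') (hnb' : ¬ IsLf R b') (hne : (a, b) ≠ (a', b')) :
    ∀ x ∈ chainV R hwf b, x ∉ chainV R hwf b' := by
  intro x hx hx'
  have hbW : b ∉ W0 R := by
    intro hw
    rw [chainV_of_W0 hwf hw] at hx
    simp at hx
  have hbW' : b' ∉ W0 R := by
    intro hw
    rw [chainV_of_W0 hwf hw] at hx'
    simp at hx'
  have hs := chainV_mem_spec hwf hphy hnc b hnb x hx
  have hs' := chainV_mem_spec hwf hphy hnc b' hnb' x hx'
  have hgen : ∀ c c' d d' : V, c ∈ W0 R → c' ∈ W0 R → R c d → ¬IsLf R d → R c' d' →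
      ¬ IsLf R d' → d ∉ W0 R → d' ∉ W0 R →
      ReflTransGen (subR R) d d' → (c, d) = (c', d') := by
    intro c c' d d' hc hc' hd hnld hd' hnld' hdW hdW' hh
    rcases hh.cases_tail with rfl | ⟨z, hz1, hz2⟩
    · obtain ⟨hin1, _⟩ := subdiv_struct hphy hnc hdW hnld
      obtain ⟨p, hp, hpu⟩ := inDeg_one_spec hin1
      rw [Prod.mk.injEq]
      exact ⟨(hpu c hd).trans (hpu c' hd').symm, rfl⟩
    · exfalso
      obtain ⟨hin1, _⟩ := subdiv_struct hphy hnc hdW' hnld'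
      obtain ⟨p, hp, hpu⟩ := inDeg_one_spec hin1
      have hzc : z = c' := (hpu z hz2.1).trans (hpu c' hd').symm
      rcases hz1.cases_tail with rfl | ⟨z', _, hz2'⟩
      · exact hdW (hzc ▸ hc')
      · exact hz2'.2.1 (hzc ▸ hc')
  rcases sub_anc hphy hnc x b b' hs.2.2.1 hs'.2.2.1 with hh | hh
  · exact hne (hgen a a' b b' ha ha' hab hnb hab' hnb' hbW hbW' hh)
  · exact hne ((hgen a' a b' b ha' ha hab' hnb' hab hnb hbW' hbW hh).symm)

end ChainLemmas

section Key
open Relation Classical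

variable {V : Type*} [Fintype V] {R : V → V → Prop}

noncomputable def pfn (R : V → V → Prop) : V → V :=
  fun x => if h : ∃ p, R p x then h.choose else x

lemma avoid_leaves (hphy : IsPhyloNet R) {P : V → V → Prop}
    (hPR : ∀ p q, P p q → R p q ∨ R q p) (hPs : ∀ a b, P a b → P b a) {a b : V}
    (h : ReflTransGen P a b) (ha : ¬ IsLf R a) (hb : ¬ IsLf R b) :
    ReflTransGen (fun p q => P p q ∧ ¬ IsLf R p ∧ ¬ IsLf R q) a b := by
  have h2 := avoidSet' hPs {x | IsLf R x} (pfn R) ?_ h ha hb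
  · exact Relation.ReflTransGen.mono (fun p q hh => ⟨hh.1, hh.2.1, hh.2.2⟩) _ _ h2
  · intro x hx
    have hlx : IsLf R x := hx
    constructor
    · have hex : ∃ p, R p x := leaf_parent hphy hlx
      rw [pfn, dif_pos hex]
      exact parent_not_isLf hex.choose_spec
    · intro y hy
      rcases hPR _ _ hy with h' | h'
      · exact (isLf_no_child hlx h').elim
      · have hex : ∃ p, R p x := ⟨y, h'⟩
        rw [pfn, dif_pos hex]
        obtain ⟨p, hp, hpu⟩ := inDeg_one_spec (leaf_inDeg_one hphy hlx)
        rw [hpu y h', hpu hex.choose hex.choose_spec]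

lemma avoid_single {P : V → V → Prop} (hPs : ∀ a b, P a b → P b a) {v0 n0 : V}
    (hn0 : n0 ≠ v0) (hnb : ∀ y, P v0 y → y = n0) {a b : V} (h : ReflTransGen P a b)
    (ha : a ≠ v0) (hb : b ≠ v0) :
    ReflTransGen (fun p q => P p q ∧ p ≠ v0 ∧ q ≠ v0) a b := by
  have h2 := avoidSet' hPs {v0} (fun _ => n0) ?_ h (by simpa) (by simpa)
  · exact Relation.ReflTransGen.mono (fun p q hh => ⟨hh.1, by simpa using hh.2.1, by simpa using hh.2.2⟩) _ _ h2
  · intro x hx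
    have : x = v0 := hx
    subst this
    exact ⟨by simpa using hn0, hnb⟩

lemma key_conn (hphy : IsPhyloNet R) (hnc : ∀ a b, CutArc R a b → IsLf R b)
    (hrec : ∃ w, inDeg R w = 2) (v0 : V) :
    ∀ a b, ¬ IsLf R a → ¬ IsLf R b → a ≠ v0 → b ≠ v0 →
      ReflTransGen (fun p q => (¬ IsLf R p ∧ p ≠ v0) ∧ (¬ IsLf R q ∧ q ≠ v0)
        ∧ (R p q ∨ R q p)) a b := by
  have hacy := hphy.1
  obtain ⟨r, hr0, hruu0⟩ := hphy.2.1
  have hruu : ∀ x, inDeg R x = 0 → x = r := fun x hx => hruu0 x hx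
  set Q : V → V → Prop := fun p q => (¬ IsLf R p ∧ p ≠ v0) ∧ (¬ IsLf R q ∧ q ≠ v0)
    ∧ (R p q ∨ R q p) with hQdef
  have hQs : ∀ a b, Q a b → Q b a := by
    rintro a b ⟨h1, h2, h3⟩
    exact ⟨h2, h1, h3.symm⟩
  have notCut : ∀ p q, R p q → ¬ IsLf R q → ∀ x y : V,
      ReflTransGen (fun s t => (R s t ∨ R t s) ∧
        ¬((s = p ∧ t = q) ∨ (s = q ∧ t = p))) x y := by
    intro p q hpq hq x y
    by_contra hcon
    exact hq (hnc p q ⟨hpq, x, y, hcon⟩)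
  have hPsym : ∀ (p q : V), ∀ s t : V, ((R s t ∨ R t s) ∧
      ¬((s = p ∧ t = q) ∨ (s = q ∧ t = p))) →
      ((R t s ∨ R s t) ∧ ¬((t = p ∧ s = q) ∨ (t = q ∧ s = p))) := by
    rintro p q s t ⟨h1, h2⟩
    refine ⟨h1.symm, ?_⟩
    rintro (⟨rfl, rfl⟩ | ⟨rfl, rfl⟩)
    · exact h2 (Or.inr ⟨rfl, rfl⟩)
    · exact h2 (Or.inl ⟨rfl, rfl⟩)
  have pipeline : ∀ p q n0, R p q → ¬ IsLf R q → n0 ≠ v0 →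
      (∀ y, (R v0 y ∨ R y v0) → ¬((v0 = p ∧ y = q) ∨ (v0 = q ∧ y = p)) → ¬ IsLf R y →
        y = n0) →
      ∀ a b, ¬ IsLf R a → ¬ IsLf R b → a ≠ v0 → b ≠ v0 → ReflTransGen Q a b := by
    intro p q n0 hpq hql hn0 hun a b hla hlb hav hbv
    have h0 := notCut p q hpq hql a b
    have h1 := avoid_leaves hphy (fun s t h => h.1) (hPsym p q) h0 hla hlb
    have h2 := avoid_single
      (fun a' b' hh => ⟨hPsym p q _ _ hh.1, hh.2.2, hh.2.1⟩) hn0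
      (fun y hy => hun y hy.1.1 hy.1.2 hy.2.2) h1 hav hbv
    exact Relation.ReflTransGen.mono (fun s t hh => ⟨⟨hh.1.2.1, hh.2.1⟩, ⟨hh.1.2.2, hh.2.2⟩, hh.1.1.1⟩) _ _ h2
  have toroot : ∀ v, ¬ IsLf R v →
      ReflTransGen (fun s t => ¬IsLf R s ∧ ¬IsLf R t ∧ (R s t ∨ R t s)) v r := by
    have hwf2 : WellFounded R := wf_of_acyclic hacy
    intro v
    induction v using hwf2.induction with
    | _ v ih =>
      intro hnl
      by_cases hv : v = r
      · exact hv ▸ ReflTransGen.refl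
      · obtain ⟨p, hp⟩ := nonroot_has_parent hphy hruu hv
        exact ReflTransGen.head ⟨hnl, parent_not_isLf hp, Or.inr hp⟩
          (ih p hp (parent_not_isLf hp))
  have hNs : ∀ a b : V, (¬IsLf R a ∧ ¬IsLf R b ∧ (R a b ∨ R b a)) →
      (¬IsLf R b ∧ ¬IsLf R a ∧ (R b a ∨ R a b)) := by
    rintro a b ⟨h1, h2, h3⟩
    exact ⟨h2, h1, h3.symm⟩
  by_cases hlv0 : IsLf R v0
  · intro a b hla hlb hav hbv
    exact Relation.ReflTransGen.mono
      (fun s t hh => ⟨⟨hh.1, fun h => hh.1 (by rw [h]; exact hlv0)⟩,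
        ⟨hh.2.1, fun h => hh.2.1 (by rw [h]; exact hlv0)⟩, hh.2.2⟩) _ _ ((toroot a hla).trans (rtg_symm hNs (toroot b hlb)))
  have hv0nl : ¬ IsLf R v0 := hlv0
  have step1 : ∀ a, ¬ IsLf R a → a ≠ v0 →
      ∃ z, (R v0 z ∨ R z v0) ∧ ¬ IsLf R z ∧ z ≠ v0 ∧ ReflTransGen Q a z := by
    intro a hla hav
    have hw : ReflTransGen (fun s t => ¬IsLf R s ∧ ¬IsLf R t ∧ (R s t ∨ R t s)) a v0 :=
      (toroot a hla).trans (rtg_symm hNs (toroot v0 hv0nl))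
    obtain ⟨z, hz, hwalk, hzo⟩ := truncAt v0 hw hav
    rcases hzo with rfl | hzstep
    · exact absurd rfl hz
    · exact ⟨z, hzstep.2.2.symm, hzstep.1, hz,
        Relation.ReflTransGen.mono (fun s t hh => ⟨⟨hh.1.1, hh.2.1⟩, ⟨hh.1.2.1, hh.2.2⟩, hh.1.2.2⟩) _ _ hwalk⟩
  have reach : ∀ cx d, R v0 cx → ¬ IsLf R cx → ¬ IsLf R d → d ≠ v0 →
      ∃ z, z ≠ v0 ∧ ReflTransGen Q cx z ∧ (z = d ∨ (((R z v0 ∨ R v0 z) ∧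
        ¬((z = v0 ∧ v0 = cx) ∨ (z = cx ∧ v0 = v0))) ∧ ¬IsLf R z)) := by
    intro cx d hRcx hnlcx hnld hdne
    have h0 := notCut v0 cx hRcx hnlcx cx d
    have h1' := avoid_leaves hphy (fun s t h => h.1) (hPsym v0 cx) h0 hnlcx hnld
    obtain ⟨z, hz, hwalk, hzo⟩ := truncAt v0 h1' (neq_of_R hacy hRcx).symm
    refine ⟨z, hz, Relation.ReflTransGen.mono
      (fun s t hh => ⟨⟨hh.1.2.1, hh.2.1⟩, ⟨hh.1.2.2, hh.2.2⟩, hh.1.1.1⟩) _ _ hwalk, ?_⟩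
    rcases hzo with rfl | hstep
    · exact Or.inl rfl
    · exact Or.inr ⟨hstep.1, hstep.2.1⟩
  have reachP : ∀ p' d, R p' v0 → ¬ IsLf R d → d ≠ v0 →
      ∃ z, z ≠ v0 ∧ ReflTransGen Q p' z ∧ (z = d ∨ (((R z v0 ∨ R v0 z) ∧
        ¬((z = p' ∧ v0 = v0) ∨ (z = v0 ∧ v0 = p'))) ∧ ¬IsLf R z)) := by
    intro p' d hRp hnld hdne
    have h0 := notCut p' v0 hRp hv0nl p' d
    have h1' := avoid_leaves hphy (fun s t h => h.1) (hPsym p' v0) h0 (parent_not_isLf hRp) hnld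
    obtain ⟨z, hz, hwalk, hzo⟩ := truncAt v0 h1' (neq_of_R hacy hRp)
    refine ⟨z, hz, Relation.ReflTransGen.mono
      (fun s t hh => ⟨⟨hh.1.2.1, hh.2.1⟩, ⟨hh.1.2.2, hh.2.2⟩, hh.1.1.1⟩) _ _ hwalk, ?_⟩
    rcases hzo with rfl | hstep
    · exact Or.inl rfl
    · exact Or.inr ⟨hstep.1, hstep.2.1⟩
  intro a b hla hlb hav hbv
  rcases hphy.2.2 v0 with ⟨h1, h2⟩ | ⟨h1, h2⟩ | ⟨h1, h2⟩ | ⟨h1, h2⟩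
  · -- root
    obtain ⟨c1, c2, hne12, hc1, hc2, hall⟩ := outDeg_two_spec h2
    have hxru : ∀ x, inDeg R x = 0 → x = v0 := fun x hx => (hruu x hx).trans (hruu v0 h1).symm
    have hnl1 : ¬IsLf R c1 := root_child_not_isLf hphy hnc hrec h1 hxru hc1
    refine pipeline v0 c1 c2 hc1 hnl1 (neq_of_R hacy hc2).symm ?_ a b hla hlb hav hbv
    intro y hor hnp hnly
    rcases hor with h | h
    · rcases hall y h with rfl | rfl
      · exact absurd (Or.inl ⟨rfl, rfl⟩) hnp
      · rfl
    · exact (inDeg_zero_spec h1 y h).elim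
  · -- split
    obtain ⟨p0, hp0, hpu⟩ := inDeg_one_spec h1
    obtain ⟨c1, c2, hne12, hc1, hc2, hall⟩ := outDeg_two_spec h2
    have hp0nl : ¬IsLf R p0 := parent_not_isLf hp0
    have hp0ne : p0 ≠ v0 := neq_of_R hacy hp0
    by_cases hleaf : IsLf R c1 ∨ IsLf R c2
    · have hcase : ∃ ℓ c, IsLf R ℓ ∧ R v0 ℓ ∧ R v0 c ∧ ¬IsLf R c ∧
          ∀ y, R v0 y → y = ℓ ∨ y = c := by
        rcases hleaf with h | h
        · have hc2nl : ¬IsLf R c2 :=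
            fun h2' => no_split_two_leaves hphy hnc h1 hc1 hc2 hne12 h h2'
          exact ⟨c1, c2, h, hc1, hc2, hc2nl, hall⟩
        · have hc1nl : ¬IsLf R c1 :=
            fun h1' => no_split_two_leaves hphy hnc h1 hc2 hc1 hne12.symm h h1'
          exact ⟨c2, c1, h, hc2, hc1, hc1nl, fun y hy => (hall y hy).symm⟩
      obtain ⟨ℓ, c, hℓ, hℓR, hcR, hcnl, hall'⟩ := hcase
      refine pipeline v0 c p0 hcR hcnl hp0ne ?_ a b hla hlb hav hbv
      intro y hor hnp hnly
      rcases hor with h | h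
      · rcases hall' y h with rfl | rfl
        · exact absurd hℓ hnly
        · exact absurd (Or.inl ⟨rfl, rfl⟩) hnp
      · exact hpu y h
    · push_neg at hleaf
      have hA : ReflTransGen Q c1 p0 ∨ ReflTransGen Q c1 c2 := by
        obtain ⟨z, hz, hcom, hzo⟩ := reach c1 p0 hc1 hleaf.1 hp0nl hp0ne
        rcases hzo with rfl | ⟨⟨hor, hnp⟩, hnlz⟩
        · exact Or.inl hcom
        · rcases hor with h | h
          · obtain rfl := hpu z h
            exact Or.inl hcom
          · rcases hall z h with rfl | rfl
            · exact absurd (Or.inr ⟨rfl, rfl⟩) hnp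
            · exact Or.inr hcom
      have hB : ReflTransGen Q c2 p0 ∨ ReflTransGen Q c2 c1 := by
        obtain ⟨z, hz, hcom, hzo⟩ := reach c2 p0 hc2 hleaf.2 hp0nl hp0ne
        rcases hzo with rfl | ⟨⟨hor, hnp⟩, hnlz⟩
        · exact Or.inl hcom
        · rcases hor with h | h
          · obtain rfl := hpu z h
            exact Or.inl hcom
          · rcases hall z h with rfl | rfl
            · exact Or.inr hcom
            · exact absurd (Or.inr ⟨rfl, rfl⟩) hnp
      have hC : ReflTransGen Q p0 c1 ∨ ReflTransGen Q p0 c2 := by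
        obtain ⟨z, hz, hcom, hzo⟩ := reachP p0 c1 hp0 hleaf.1 (neq_of_R hacy hc1).symm
        rcases hzo with rfl | ⟨⟨hor, hnp⟩, hnlz⟩
        · exact Or.inl hcom
        · rcases hor with h | h
          · exact absurd (Or.inl ⟨hpu z h, rfl⟩) hnp
          · rcases hall z h with rfl | rfl
            · exact Or.inl hcom
            · exact Or.inr hcom
      have hubc : ReflTransGen Q c1 p0 ∧ ReflTransGen Q c2 p0 := by
        rcases hA with hA | hA <;> rcases hB with hB | hB
        · exact ⟨hA, hB⟩
        · exact ⟨hA, hB.trans hA⟩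
        · exact ⟨hA.trans hB, hB⟩
        · rcases hC with hC | hC
          · exact ⟨rtg_symm hQs hC, hB.trans (rtg_symm hQs hC)⟩
          · exact ⟨hA.trans (rtg_symm hQs hC), rtg_symm hQs hC⟩
      have final : ∀ x, ¬IsLf R x → x ≠ v0 → ReflTransGen Q x p0 := by
        intro x hlx hxv
        obtain ⟨z, hz1, hz2, hz3, hcom⟩ := step1 x hlx hxv
        rcases hz1 with h | h
        · rcases hall z h with rfl | rfl
          · exact hcom.trans hubc.1
          · exact hcom.trans hubc.2
        · obtain rfl := hpu z h
          exact hcom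
      exact (final a hla hav).trans (rtg_symm hQs (final b hlb hbv))
  · -- recombination
    obtain ⟨p1, p2, hpne, hp1, hp2, hpall⟩ := inDeg_two_spec h1
    obtain ⟨c, hcR, hcall⟩ := outDeg_one_spec h2
    have hp1nl : ¬IsLf R p1 := parent_not_isLf hp1
    have hp2nl : ¬IsLf R p2 := parent_not_isLf hp2
    have hp1ne : p1 ≠ v0 := neq_of_R hacy hp1
    have hp2ne : p2 ≠ v0 := neq_of_R hacy hp2
    by_cases hlc : IsLf R c
    · refine pipeline p1 v0 p2 hp1 hv0nl hp2ne ?_ a b hla hlb hav hbv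
      intro y hor hnp hnly
      rcases hor with h | h
      · rw [hcall y h] at hnly
        exact absurd hlc hnly
      · rcases hpall y h with rfl | rfl
        · exact absurd (Or.inr ⟨rfl, rfl⟩) hnp
        · rfl
    · have hA : ReflTransGen Q c p1 ∨ ReflTransGen Q c p2 := by
        obtain ⟨z, hz, hcom, hzo⟩ := reach c p1 hcR hlc hp1nl hp1ne
        rcases hzo with rfl | ⟨⟨hor, hnp⟩, hnlz⟩
        · exact Or.inl hcom
        · rcases hor with h | h
          · rcases hpall z h with rfl | rfl
            · exact Or.inl hcom
            · exact Or.inr hcom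
          · exact absurd (Or.inr ⟨hcall z h, rfl⟩) hnp
      have hB : ReflTransGen Q p1 p2 ∨ ReflTransGen Q p1 c := by
        obtain ⟨z, hz, hcom, hzo⟩ := reachP p1 p2 hp1 hp2nl hp2ne
        rcases hzo with rfl | ⟨⟨hor, hnp⟩, hnlz⟩
        · exact Or.inl hcom
        · rcases hor with h | h
          · rcases hpall z h with rfl | rfl
            · exact absurd (Or.inl ⟨rfl, rfl⟩) hnp
            · exact Or.inl hcom
          · obtain rfl := hcall z h
            exact Or.inr hcom
      have hCq : ReflTransGen Q p2 p1 ∨ ReflTransGen Q p2 c := by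
        obtain ⟨z, hz, hcom, hzo⟩ := reachP p2 p1 hp2 hp1nl hp1ne
        rcases hzo with rfl | ⟨⟨hor, hnp⟩, hnlz⟩
        · exact Or.inl hcom
        · rcases hor with h | h
          · rcases hpall z h with rfl | rfl
            · exact Or.inl hcom
            · exact absurd (Or.inl ⟨rfl, rfl⟩) hnp
          · obtain rfl := hcall z h
            exact Or.inr hcom
      have hub : ReflTransGen Q p2 p1 ∧ ReflTransGen Q c p1 := by
        rcases hB with hB | hB
        · refine ⟨rtg_symm hQs hB, ?_⟩
          rcases hA with hA | hA
          · exact hA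
          · exact hA.trans (rtg_symm hQs hB)
        · rcases hCq with hC | hC
          · exact ⟨hC, rtg_symm hQs hB⟩
          · exact ⟨hC.trans (rtg_symm hQs hB), rtg_symm hQs hB⟩
      have final : ∀ x, ¬IsLf R x → x ≠ v0 → ReflTransGen Q x p1 := by
        intro x hlx hxv
        obtain ⟨z, hz1, hz2, hz3, hcom⟩ := step1 x hlx hxv
        rcases hz1 with h | h
        · obtain rfl := hcall z h
          exact hcom.trans hub.2
        · rcases hpall z h with rfl | rfl
          · exact hcom
          · exact hcom.trans hub.1
      exact (final a hla hav).trans (rtg_symm hQs (final b hlb hbv))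
  · exact absurd h2 hv0nl

end Key


section Assemble
open Relation Classical

theorem simple_of_no_cutarc {V : Type*} [Fintype V] {R : V → V → Prop} (k : ℕ) (hk : 1 ≤ k)
    (hgood : GoodNet R) (hlev : LevelK k R) (hstrict : ¬ LevelK (k - 1) R)
    (hnc : ∀ a b, CutArc R a b → IsLf R b) : SimpleLevel k R := by
  classical
  obtain ⟨hphy, hgood2⟩ := hgood
  have hacy := hphy.1
  obtain ⟨r, hr0, hruu0⟩ := hphy.2.1
  have hruu : ∀ x, inDeg R x = 0 → x = r := fun x hx => hruu0 x hx
  have hwf : WellFounded (flip R) := wf_flip_of_acyclic hacy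
  have hwf2 : WellFounded R := wf_of_acyclic hacy
  have hrec : ∃ v, inDeg R v = 2 := exists_recomb hstrict
  have hnx : ∀ v, ¬ IsLf R v → nextV R hwf v ∈ W0 R :=
    fun v h => (nextV_spec hwf hphy hnc v h).1
  set G := genG R hwf hnx with hGdef
  set φ : G.W → V := fun w => ((eW R).symm w).val with hφdef
  set ψ : G.E → List V := fun i => chainV R hwf ((eE R).symm i).val.2 with hψdef
  have hWval : ∀ x : ↥(W0 R), φ (eW R x) = x.val := by
    intro x
    simp [hφdef]
  have hφinj : Function.Injective φ :=
    fun a b h => (eW R).symm.injective (Subtype.ext h)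
  have hsrc : ∀ i : G.E, G.src i = eW R ⟨((eE R).symm i).val.1, ((eE R).symm i).prop.2.1⟩ :=
    fun i => rfl
  have htgt : ∀ i : G.E, G.tgt i = eW R ⟨nextV R hwf ((eE R).symm i).val.2,
      hnx _ ((eE R).symm i).prop.2.2⟩ := fun i => rfl
  have hφsrc : ∀ i : G.E, φ (G.src i) = ((eE R).symm i).val.1 := by
    intro i
    rw [hsrc i, hWval]
  have hφtgt : ∀ i : G.E, φ (G.tgt i) = nextV R hwf ((eE R).symm i).val.2 := by
    intro i
    rw [htgt i, hWval]
  have hfull : ∀ i : G.E, fullPath G φ ψ i =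
      (((eE R).symm i).val.1 :: chainV R hwf ((eE R).symm i).val.2) ++
        [nextV R hwf ((eE R).symm i).val.2] := by
    intro i
    show φ (G.src i) :: ψ i ++ [φ (G.tgt i)] = _
    rw [hφsrc, hφtgt, hψdef]
  have hchW0 : ∀ b : V, chainV R hwf b = [] ↔ b ∈ W0 R := by
    intro b
    constructor
    · intro h
      by_contra hb
      obtain ⟨tl, htl⟩ := chain_head hwf hb
      rw [h] at htl
      simp at htl
    · exact chainV_of_W0 hwf
  have hmemlast : ∀ (l : List V) (x a : V), l ≠ [] → (a :: l).getLast? = some x → x ∈ l := by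
    intro l x a hl hx
    cases l with
    | nil => exact absurd rfl hl
    | cons c t =>
      rw [List.getLast?_cons_cons] at hx
      obtain ⟨h9, hv9⟩ := List.mem_getLast?_eq_getLast (show x ∈ (c :: t).getLast? from hx)
      rw [hv9]
      exact List.getLast_mem h9
  set fL : G.E → V := fun i =>
    (((((eE R).symm i).val.1 :: chainV R hwf ((eE R).symm i).val.2)).getLast?).getD r
    with hfLdef
  have hlastmem : ∀ (a : V) (l : List V), l ≠ [] →
      ∃ x, (a :: l).getLast? = some x ∧ x ∈ l := by
    intro a l hl
    cases l with
    | nil => exact absurd rfl hl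
    | cons c t =>
      refine ⟨(c :: t).getLast (by simp), ?_, ?_⟩
      · rw [List.getLast?_cons_cons]
        exact List.getLast?_eq_getLast_of_ne_nil _
      · exact List.getLast_mem _
  have hIn : ∀ w : ↥(W0 R), mInDeg G (eW R w) = inDeg R w.val := by
    intro w
    have htgteq : ∀ i : G.E, G.tgt i = eW R w ↔
        nextV R hwf ((eE R).symm i).val.2 = w.val := by
      intro i
      rw [htgt i]
      constructor
      · intro h
        exact congrArg Subtype.val ((eW R).injective h)
      · intro h
        exact congrArg (eW R) (Subtype.ext h)
    have hbij : Set.BijOn fL {i | G.tgt i = eW R w} {p | R p w.val} := by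
      refine ⟨?_, ?_, ?_⟩
      · intro i hi
        have hnx2 : nextV R hwf ((eE R).symm i).val.2 = w.val := (htgteq i).1 hi
        obtain ⟨y, hy, hyR⟩ := chain'_concat_rel
          (chain_fullpath hwf hphy hnc _ ((eE R).symm i).prop.2.2 _ ((eE R).symm i).prop.1)
          (List.cons_ne_nil _ _)
        have hfv : fL i = y := by
          simp only [hfLdef]
          rw [hy]
          rfl
        rw [hfv]
        show R y w.val
        rw [← hnx2]
        exact hyR
      · intro i hi i' hi' hval
        have hnx2 : nextV R hwf ((eE R).symm i).val.2 = w.val := (htgteq i).1 hi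
        have hnx2' : nextV R hwf ((eE R).symm i').val.2 = w.val := (htgteq i').1 hi'
        have hmixed : ∀ j j' : G.E, chainV R hwf ((eE R).symm j).val.2 = [] →
            chainV R hwf ((eE R).symm j').val.2 ≠ [] → fL j = fL j' → False := by
          intro j j' hc hc' hvv
          have h1 : fL j = ((eE R).symm j).val.1 := by
            simp only [hfLdef]
            rw [hc]
            rfl
          obtain ⟨x, hx1, hx2⟩ := hlastmem (((eE R).symm j').val.1) _ hc'
          have h2 : fL j' = x := by
            simp only [hfLdef]
            rw [hx1]
            rfl
          have hspec := chainV_mem_spec hwf hphy hnc _ ((eE R).symm j').prop.2.2 x hx2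
          apply hspec.1
          rw [← h2, ← hvv, h1]
          exact ((eE R).symm j).prop.2.1
        have hkey : ((eE R).symm i).val = ((eE R).symm i').val := by
          by_cases hc : chainV R hwf ((eE R).symm i).val.2 = []
          · by_cases hc' : chainV R hwf ((eE R).symm i').val.2 = []
            · have hbW := (hchW0 _).1 hc
              have hbW' := (hchW0 _).1 hc'
              have h1 : fL i = ((eE R).symm i).val.1 := by
                simp only [hfLdef]
                rw [hc]
                rfl
              have h2 : fL i' = ((eE R).symm i').val.1 := by
                simp only [hfLdef]
                rw [hc']
                rfl
              have hb1 : ((eE R).symm i).val.2 = w.val := by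
                rw [← hnx2, nextV_of_W0 hwf hbW]
              have hb2 : ((eE R).symm i').val.2 = w.val := by
                rw [← hnx2', nextV_of_W0 hwf hbW']
              rw [show ((eE R).symm i).val =
                (((eE R).symm i).val.1, ((eE R).symm i).val.2) from rfl,
                show ((eE R).symm i').val =
                (((eE R).symm i').val.1, ((eE R).symm i').val.2) from rfl]
              rw [hb1, hb2, ← h1, ← h2, hval]
            · exact (hmixed i i' hc hc' hval).elim
          · by_cases hc' : chainV R hwf ((eE R).symm i').val.2 = []
            · exact (hmixed i' i hc' hc hval.symm).elim
            · by_contra hne2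
              obtain ⟨x, hx1, hx2⟩ := hlastmem (((eE R).symm i).val.1) _ hc
              obtain ⟨x', hx1', hx2'⟩ := hlastmem (((eE R).symm i').val.1) _ hc'
              have h1 : fL i = x := by
                simp only [hfLdef]
                rw [hx1]
                rfl
              have h2 : fL i' = x' := by
                simp only [hfLdef]
                rw [hx1']
                rfl
              have hxx : x = x' := by rw [← h1, ← h2, hval]
              refine chains_disjoint hwf hphy hnc ((eE R).symm i).prop.2.1
                ((eE R).symm i').prop.2.1 ((eE R).symm i).prop.1 ((eE R).symm i).prop.2.2
                ((eE R).symm i').prop.1 ((eE R).symm i').prop.2.2 ?_ x hx2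
                (by rw [hxx]; exact hx2')
              intro hpq
              apply hne2
              rw [show ((eE R).symm i).val =
                (((eE R).symm i).val.1, ((eE R).symm i).val.2) from rfl,
                show ((eE R).symm i').val =
                (((eE R).symm i').val.1, ((eE R).symm i').val.2) from rfl]
              exact hpq
        exact (eE R).symm.injective (Subtype.ext hkey)
      · intro p hp
        have hwnl : ¬ IsLf R w.val := W0_not_isLf hphy w.prop
        by_cases hpW : p ∈ W0 R
        · have hE : (p, w.val) ∈ E0 R := ⟨hp, hpW, hwnl⟩
          refine ⟨eE R ⟨_, hE⟩, ?_, ?_⟩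
          · show G.tgt _ = eW R w
            erw [htgteq]
            simp only [Equiv.symm_apply_apply]
            exact nextV_of_W0 hwf w.prop
          · simp only [hfLdef, Equiv.symm_apply_apply]
            rw [chainV_of_W0 hwf w.prop]
            rfl
        · have hpnl : ¬ IsLf R p := parent_not_isLf hp
          obtain ⟨htW, b0, hb1, hb2, hb3, hb4⟩ := topV_spec hphy hnc hwf2 p hpnl hpW
          have hE : (topV R hwf2 p, b0) ∈ E0 R := ⟨hb1, htW, hb3⟩
          have hex : ∃ c, R p c ∧ ¬ IsLf R c := ⟨w.val, hp, hwnl⟩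
          have hwc : hex.choose = w.val := subStep_det hphy hnc hpW hpnl hex.choose_spec.1
            hex.choose_spec.2 hp hwnl
          have hnp : nextV R hwf p = w.val := by
            rw [(chainV_of_sub hwf hpW hex).2, hwc, nextV_of_W0 hwf w.prop]
          have hend : ∀ c, R p c → ¬ IsLf R c → c ∈ W0 R := by
            intro c hc hcnl
            have hcb : c = w.val := subStep_det hphy hnc hpW hpnl hc hcnl hp hwnl
            rw [hcb]
            exact w.prop
          have hlast := chain_getLast hwf hphy hnc b0 p hb2 hb3 hb4 hend
          refine ⟨eE R ⟨_, hE⟩, ?_, ?_⟩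
          · show G.tgt _ = eW R w
            erw [htgteq]
            simp only [Equiv.symm_apply_apply]
            rw [nextV_sub_invariant hwf hphy hnc b0 hb2 hb3 p hb4]
            exact hnp
          · simp only [hfLdef, Equiv.symm_apply_apply]
            obtain ⟨tl, htl⟩ := chain_head hwf hb2
            rw [htl] at hlast ⊢
            rw [List.getLast?_cons_cons, hlast]
            rfl
    calc mInDeg G (eW R w) = ({i | G.tgt i = eW R w} : Set G.E).ncard := rfl
      _ = (fL '' {i | G.tgt i = eW R w}).ncard := (Set.ncard_image_of_injOn hbij.2.1).symm
      _ = ({p | R p w.val} : Set V).ncard := by rw [hbij.image_eq]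
      _ = inDeg R w.val := rfl
  have hOut : ∀ w : ↥(W0 R), mOutDeg G (eW R w) = ({c | R w.val c ∧ ¬ IsLf R c}).ncard := by
    intro w
    have hsrceq : ∀ i : G.E, G.src i = eW R w ↔ ((eE R).symm i).val.1 = w.val := by
      intro i
      rw [hsrc i]
      constructor
      · intro h
        exact congrArg Subtype.val ((eW R).injective h)
      · intro h
        exact congrArg (eW R) (Subtype.ext h)
    have hbij : Set.BijOn (fun i : G.E => ((eE R).symm i).val.2)
        {i | G.src i = eW R w} {c | R w.val c ∧ ¬ IsLf R c} := by
      refine ⟨?_, ?_, ?_⟩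
      · intro i hi
        have h1 : ((eE R).symm i).val.1 = w.val := (hsrceq i).1 hi
        exact ⟨h1 ▸ ((eE R).symm i).prop.1, ((eE R).symm i).prop.2.2⟩
      · intro i hi i' hi' hval
        have h1 : ((eE R).symm i).val.1 = w.val := (hsrceq i).1 hi
        have h2 : ((eE R).symm i').val.1 = w.val := (hsrceq i').1 hi'
        apply (eE R).symm.injective
        apply Subtype.ext
        rw [show ((eE R).symm i).val = (((eE R).symm i).val.1, ((eE R).symm i).val.2) from rfl,
          show ((eE R).symm i').val = (((eE R).symm i').val.1, ((eE R).symm i').val.2) from rfl,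
          h1, h2, show ((eE R).symm i).val.2 = ((eE R).symm i').val.2 from hval]
      · intro c hc
        have hE : (w.val, c) ∈ E0 R := ⟨hc.1, w.prop, hc.2⟩
        refine ⟨eE R ⟨_, hE⟩, ?_, ?_⟩
        · show G.src _ = eW R w
          erw [hsrc]
          apply congrArg
          apply Subtype.ext
          simp only [Equiv.symm_apply_apply]
        · simp only [Equiv.symm_apply_apply]
    calc mOutDeg G (eW R w) = ({i | G.src i = eW R w} : Set G.E).ncard := rfl
      _ = ((fun i : G.E => ((eE R).symm i).val.2) '' {i | G.src i = eW R w}).ncard :=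
          (Set.ncard_image_of_injOn hbij.2.1).symm
      _ = _ := by rw [hbij.image_eq]
  have hrootchild : ∀ c, R r c → ¬ IsLf R c := fun c => root_child_not_isLf hphy hnc hrec hr0 hruu
  have hrW : r ∈ W0 R := Or.inl hr0
  have hNL : IsBCC R {v : V | ¬ IsLf R v} := by
    obtain ⟨c1, c2, hne12, hc1, hc2, hall⟩ := outDeg_two_spec (root_out2 hphy hr0)
    have hnl1 := hrootchild c1 hc1
    have hrnl : ¬ IsLf R r := parent_not_isLf hc1
    have toroot : ∀ v, ¬ IsLf R v → ReflTransGen (fun p q => p ∈ {v : V | ¬IsLf R v} ∧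
        q ∈ {v : V | ¬IsLf R v} ∧ (R p q ∨ R q p)) v r := by
      intro v
      induction v using hwf2.induction with
      | _ v ih =>
        intro hnl
        by_cases hv : v = r
        · exact hv ▸ ReflTransGen.refl
        · obtain ⟨p, hp⟩ := nonroot_has_parent hphy hruu hv
          exact ReflTransGen.head ⟨hnl, parent_not_isLf hp, Or.inr hp⟩
            (ih p hp (parent_not_isLf hp))
    have hconn0 : ConnOn R {v : V | ¬ IsLf R v} := by
      intro a ha b hb
      refine (toroot a ha).trans (rtg_symm ?_ (toroot b hb))
      rintro x y ⟨h1, h2, h3⟩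
      exact ⟨h2, h1, h3.symm⟩
    refine ⟨⟨⟨r, hrnl, c1, hnl1, hc1⟩, hconn0, ?_⟩, ?_⟩
    · intro w hw a ha b hb
      have hcw := key_conn hphy hnc hrec w a b ha.1 hb.1 ha.2 hb.2
      exact Relation.ReflTransGen.mono (fun p q hh => ⟨⟨hh.1.1, hh.1.2⟩, ⟨hh.2.1.1, hh.2.1.2⟩, hh.2.2⟩) _ _ hcw
    · intro S' hS' hsub
      by_contra hne
      have hx : ∃ x ∈ S', IsLf R x := by
        by_contra hno
        push_neg at hno
        apply hne
        apply Set.Subset.antisymm _ hsub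
        intro x hxS
        exact hno x hxS
      obtain ⟨x, hxS, hxl⟩ := hx
      obtain ⟨p, hp⟩ := leaf_parent hphy hxl
      have hpNL : ¬ IsLf R p := parent_not_isLf hp
      have hpS : p ∈ S' := hsub hpNL
      have hcon := hS'.2.2 p hpS
      have hbex : ∃ b, ¬ IsLf R b ∧ b ≠ p := by
        by_cases h1 : r = p
        · exact ⟨c1, hnl1, fun h => (neq_of_R hacy hc1) (h1.trans h.symm)⟩
        · exact ⟨r, hrnl, h1⟩
      obtain ⟨b, hbNL, hbp⟩ := hbex
      have hbS : b ∈ S' := hsub hbNL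
      have hwalk := hcon x ⟨hxS, fun h => hpNL (by rw [← show x = p from h]; exact hxl)⟩
        b ⟨hbS, hbp⟩
      have hclose : b ∈ ({x} : Set V) := by
        refine rtg_closed {x} ?_ hwalk rfl
        rintro z hz y ⟨hy1, hy2, hy3⟩
        have hzx : z = x := hz
        subst hzx
        rcases hy3 with h | h
        · exact (isLf_no_child hxl h).elim
        · obtain ⟨pp, hpp, hppu⟩ := inDeg_one_spec (leaf_inDeg_one hphy hxl)
          have hyp : y = p := (hppu y h).trans (hppu p hp).symm
          exact absurd hyp hy2.2
      exact hbNL (by rw [show b = x from hclose]; exact hxl)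
  have hcount : ({v : V | inDeg R v = 2}).ncard = k := by
    have hle : ({v : V | inDeg R v = 2}).ncard ≤ k := by
      have h9 := hlev _ hNL
      refine le_trans (le_of_eq ?_) h9
      congr 1
      ext v
      simp only [Set.mem_setOf_eq, Set.mem_sep_iff]
      constructor
      · intro hv
        refine ⟨?_, hv⟩
        intro hl
        rw [IsLf] at hl
        rcases hphy.2.2 v with ⟨h1, h2⟩ | ⟨h1, h2⟩ | ⟨h1, h2⟩ | ⟨h1, h2⟩ <;> omega
      · exact fun h => h.2
    have hge : k ≤ ({v : V | inDeg R v = 2}).ncard := by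
      rw [LevelK] at hstrict
      push_neg at hstrict
      obtain ⟨S, hSb, hS⟩ := hstrict
      have hsub : {v ∈ S | inDeg R v = 2} ⊆ {v : V | inDeg R v = 2} := fun v hv => hv.2
      have h8 := Set.ncard_le_ncard hsub (Set.toFinite _)
      omega
    omega
  have hGstep : ∀ w w' : G.W, mAdj G w w' → TransGen R (φ w) (φ w') := by
    rintro w w' ⟨i, hs, ht⟩
    rw [← hs, ← ht, hφsrc, hφtgt]
    exact TransGen.head' ((eE R).symm i).prop.1
      (nextV_spec hwf hphy hnc _ ((eE R).symm i).prop.2.2).2.2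
  have hGacy : ∀ v, ¬ TransGen (mAdj G) v v := by
    have lift : ∀ w w' : G.W, TransGen (mAdj G) w w' → TransGen R (φ w) (φ w') := by
      intro w w' h
      induction h with
      | single h => exact hGstep _ _ h
      | tail _ h2 ih => exact ih.trans (hGstep _ _ h2)
    intro v hv
    exact hacy (φ v) (lift v v hv)
  have hwfT : WellFounded (TransGen R) := by
    have h1 : IsTrans V (TransGen R) := ⟨fun _ _ _ h h' => h.trans h'⟩
    have h2 : IsIrrefl V (TransGen R) := ⟨hacy⟩
    exact Finite.wellFounded_of_trans_of_irrefl _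
  have hGparent : ∀ x : ↥(W0 R), x.val ≠ r → ∃ y : ↥(W0 R),
      mAdj G (eW R y) (eW R x) ∧ TransGen R y.val x.val := by
    intro x hx
    obtain ⟨p, hp⟩ := nonroot_has_parent hphy hruu hx
    have hxnl := W0_not_isLf hphy x.prop
    by_cases hpW : p ∈ W0 R
    · have hE : (p, x.val) ∈ E0 R := ⟨hp, hpW, hxnl⟩
      refine ⟨⟨p, hpW⟩, ⟨eE R ⟨_, hE⟩, ?_, ?_⟩, TransGen.single hp⟩
      · erw [hsrc]
        apply congrArg
        apply Subtype.ext
        simp only [Equiv.symm_apply_apply]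
      · erw [htgt]
        apply congrArg
        apply Subtype.ext
        simp only [Equiv.symm_apply_apply]
        exact nextV_of_W0 hwf x.prop
    · have hpnl := parent_not_isLf hp
      obtain ⟨htW, b0, hb1, hb2, hb3, hb4⟩ := topV_spec hphy hnc hwf2 p hpnl hpW
      have hE : (topV R hwf2 p, b0) ∈ E0 R := ⟨hb1, htW, hb3⟩
      have hex : ∃ c, R p c ∧ ¬ IsLf R c := ⟨x.val, hp, hxnl⟩
      have hxc : hex.choose = x.val := subStep_det hphy hnc hpW hpnl hex.choose_spec.1
        hex.choose_spec.2 hp hxnl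
      have hnp : nextV R hwf p = x.val := by
        rw [(chainV_of_sub hwf hpW hex).2, hxc, nextV_of_W0 hwf x.prop]
      refine ⟨⟨topV R hwf2 p, htW⟩, ⟨eE R ⟨_, hE⟩, ?_, ?_⟩, ?_⟩
      · erw [hsrc]
        apply congrArg
        apply Subtype.ext
        simp only [Equiv.symm_apply_apply]
      · erw [htgt]
        apply congrArg
        apply Subtype.ext
        simp only [Equiv.symm_apply_apply]
        rw [nextV_sub_invariant hwf hphy hnc b0 hb2 hb3 p hb4, hnp]
      · exact TransGen.head' hb1 ((subR_rtg_R hb4).tail hp)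
  have hGtoroot : ∀ v : V, ∀ hv : v ∈ W0 R,
      ReflTransGen (fun p q => mAdj G p q ∨ mAdj G q p) (eW R ⟨v, hv⟩) (eW R ⟨r, hrW⟩) := by
    intro v
    induction v using hwfT.induction with
    | _ v ih =>
      intro hv
      by_cases hvr : v = r
      · subst hvr
        exact .refl
      · obtain ⟨y, hadj, htg⟩ := hGparent ⟨v, hv⟩ hvr
        exact ReflTransGen.head (Or.inr hadj) (ih y.val htg y.prop)
  have hGtoroot' : ∀ w : G.W,
      ReflTransGen (fun p q => mAdj G p q ∨ mAdj G q p) w (eW R ⟨r, hrW⟩) := by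
    intro w
    have h := hGtoroot ((eW R).symm w).val ((eW R).symm w).prop
    have he : eW R ⟨((eW R).symm w).val, ((eW R).symm w).prop⟩ = w := by
      rw [show (⟨((eW R).symm w).val, ((eW R).symm w).prop⟩ : ↥(W0 R)) = (eW R).symm w
        from rfl]
      exact Equiv.apply_symm_apply _ _
    rwa [he] at h
  have hGconn : ∀ a b : G.W,
      ReflTransGen (fun p q => mAdj G p q ∨ mAdj G q p) a b := by
    intro a b
    exact (hGtoroot' a).trans (rtg_symm (fun p q h => h.symm) (hGtoroot' b))
  have hG2conn : ∀ w a b : G.W, a ≠ w → b ≠ w →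
      ReflTransGen (fun p q => p ≠ w ∧ q ≠ w ∧ (mAdj G p q ∨ mAdj G q p)) a b := by
    intro w a b haw hbw
    set v0 : V := ((eW R).symm w).val with hv0def
    have hv0W : v0 ∈ W0 R := ((eW R).symm w).prop
    have hweq : eW R ⟨v0, hv0W⟩ = w := by
      rw [show (⟨v0, hv0W⟩ : ↥(W0 R)) = (eW R).symm w from rfl]
      exact Equiv.apply_symm_apply _ _
    have hWne : ∀ (x : V) (hx : x ∈ W0 R), x ≠ v0 → eW R ⟨x, hx⟩ ≠ w := by
      intro x hx hxv heq
      apply hxv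
      have h2 := (eW R).injective (heq.trans hweq.symm)
      exact congrArg Subtype.val h2
    have hedge : ∀ (x y : V) (hx : x ∈ W0 R) (hE : (x, y) ∈ E0 R), x ≠ v0 →
        nextV R hwf y ≠ v0 →
        ReflTransGen (fun p q => p ≠ w ∧ q ≠ w ∧ (mAdj G p q ∨ mAdj G q p))
          (eW R ⟨x, hx⟩) (eW R ⟨nextV R hwf y, hnx y hE.2.2⟩) := by
      intro x y hx hE hxv hyv
      refine ReflTransGen.single ⟨hWne x hx hxv, hWne _ _ hyv,
        Or.inl ⟨eE R ⟨(x, y), hE⟩, ?_, ?_⟩⟩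
      · erw [hsrc]
        apply congrArg
        apply Subtype.ext
        simp only [Equiv.symm_apply_apply]
      · erw [htgt]
        apply congrArg
        apply Subtype.ext
        simp only [Equiv.symm_apply_apply]
    set projf : V → G.W := fun x =>
      if hx : x ∈ W0 R then eW R ⟨x, hx⟩
      else if hn : nextV R hwf x ∈ W0 R ∧ nextV R hwf x ≠ v0 then eW R ⟨nextV R hwf x, hn.1⟩
      else if ht : topV R hwf2 x ∈ W0 R then eW R ⟨topV R hwf2 x, ht⟩
      else w
      with hprojdef
    have hproj1 : ∀ x (hx : x ∈ W0 R), projf x = eW R ⟨x, hx⟩ := by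
      intro x hx
      simp only [hprojdef]
      erw [dif_pos hx]
    have hproj2 : ∀ x, x ∉ W0 R → ¬ IsLf R x → nextV R hwf x ≠ v0 →
        ∃ hn : nextV R hwf x ∈ W0 R, projf x = eW R ⟨nextV R hwf x, hn⟩ := by
      intro x hxW hxl hxv
      have hn := hnx x hxl
      refine ⟨hn, ?_⟩
      simp only [hprojdef]
      erw [dif_neg hxW, dif_pos (⟨hn, hxv⟩ : _ ∧ _)]
    have hproj3 : ∀ x, x ∉ W0 R → ¬ IsLf R x → nextV R hwf x = v0 →
        ∃ ht : topV R hwf2 x ∈ W0 R, projf x = eW R ⟨topV R hwf2 x, ht⟩ := by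
      intro x hxW hxl hxv
      have ht := (topV_spec hphy hnc hwf2 x hxl hxW).1
      refine ⟨ht, ?_⟩
      simp only [hprojdef]
      erw [dif_neg hxW, dif_neg (by rintro ⟨_, h⟩; exact h hxv), dif_pos ht]
    have hstep : ∀ x y, ¬ IsLf R x → x ≠ v0 → ¬ IsLf R y → y ≠ v0 → R x y →
        ReflTransGen (fun p q => p ≠ w ∧ q ≠ w ∧ (mAdj G p q ∨ mAdj G q p))
          (projf x) (projf y) := by
      intro x y hxl hxv hyl hyv hxy
      by_cases hxW : x ∈ W0 R
      · by_cases hyW : y ∈ W0 R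
        · rw [hproj1 x hxW, hproj1 y hyW]
          have h1 := hedge x y hxW ⟨hxy, hxW, hyl⟩ hxv
            (by rw [nextV_of_W0 hwf hyW]; exact hyv)
          have he : (⟨nextV R hwf y, hnx y hyl⟩ : ↥(W0 R)) = ⟨y, hyW⟩ :=
            Subtype.ext (nextV_of_W0 hwf hyW)
          rwa [he] at h1
        · by_cases hnv : nextV R hwf y = v0
          · obtain ⟨ht, hp⟩ := hproj3 y hyW hyl hnv
            rw [hproj1 x hxW, hp]
            have htop : topV R hwf2 y = x := by
              obtain ⟨hin1, _⟩ := subdiv_struct hphy hnc hyW hyl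
              obtain ⟨p, hpp, hpu⟩ := inDeg_one_spec hin1
              have hex2 : ∃ p, R p y := ⟨x, hxy⟩
              have hxc : hex2.choose = x := (hpu _ hex2.choose_spec).trans (hpu x hxy).symm
              rw [topV_eq, if_neg hyW, dif_pos hex2, hxc, topV_eq, if_pos hxW]
            rw [show (⟨topV R hwf2 y, ht⟩ : ↥(W0 R)) = ⟨x, hxW⟩ from Subtype.ext htop]
            exact .refl
          · obtain ⟨hn, hp⟩ := hproj2 y hyW hyl hnv
            rw [hproj1 x hxW, hp]
            exact hedge x y hxW ⟨hxy, hxW, hyl⟩ hxv hnv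
      · have hex : ∃ c, R x c ∧ ¬ IsLf R c := ⟨y, hxy, hyl⟩
        have hyc : hex.choose = y := subStep_det hphy hnc hxW hxl hex.choose_spec.1
          hex.choose_spec.2 hxy hyl
        have hnxy : nextV R hwf x = nextV R hwf y := by
          rw [(chainV_of_sub hwf hxW hex).2, hyc]
        by_cases hyW : y ∈ W0 R
        · have hnx2 : nextV R hwf x = y := by rw [hnxy, nextV_of_W0 hwf hyW]
          obtain ⟨hn, hp⟩ := hproj2 x hxW hxl (by rw [hnx2]; exact hyv)
          rw [hp, hproj1 y hyW,
            show (⟨nextV R hwf x, hn⟩ : ↥(W0 R)) = ⟨y, hyW⟩ from Subtype.ext hnx2]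
          exact .refl
        · have htxy : topV R hwf2 y = topV R hwf2 x := by
            obtain ⟨hin1, _⟩ := subdiv_struct hphy hnc hyW hyl
            obtain ⟨p, hpp, hpu⟩ := inDeg_one_spec hin1
            have hex2 : ∃ p, R p y := ⟨x, hxy⟩
            have hxc : hex2.choose = x := (hpu _ hex2.choose_spec).trans (hpu x hxy).symm
            rw [topV_eq, if_neg hyW, dif_pos hex2, hxc]
          by_cases hnv : nextV R hwf x = v0
          · obtain ⟨ht, hp⟩ := hproj3 x hxW hxl hnv
            obtain ⟨ht', hp'⟩ := hproj3 y hyW hyl (by rw [← hnxy]; exact hnv)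
            rw [hp, hp',
              show (⟨topV R hwf2 y, ht'⟩ : ↥(W0 R)) = ⟨topV R hwf2 x, ht⟩ from
                Subtype.ext htxy]
            exact .refl
          · obtain ⟨hn, hp⟩ := hproj2 x hxW hxl hnv
            obtain ⟨hn', hp'⟩ := hproj2 y hyW hyl (by rw [← hnxy]; exact hnv)
            rw [hp, hp',
              show (⟨nextV R hwf y, hn'⟩ : ↥(W0 R)) = ⟨nextV R hwf x, hn⟩ from
                Subtype.ext hnxy.symm]
            exact .refl
    have hva : ((eW R).symm a).val ≠ v0 := by
      intro h
      exact haw ((eW R).symm.injective (Subtype.ext h))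
    have hvb : ((eW R).symm b).val ≠ v0 := by
      intro h
      exact hbw ((eW R).symm.injective (Subtype.ext h))
    have hKC := key_conn hphy hnc hrec v0 ((eW R).symm a).val ((eW R).symm b).val
      (W0_not_isLf hphy ((eW R).symm a).prop) (W0_not_isLf hphy ((eW R).symm b).prop) hva hvb
    have hlift : ∀ x y : V,
        ReflTransGen (fun p q => (¬ IsLf R p ∧ p ≠ v0) ∧ (¬ IsLf R q ∧ q ≠ v0) ∧
          (R p q ∨ R q p)) x y →
        ReflTransGen (fun p q => p ≠ w ∧ q ≠ w ∧ (mAdj G p q ∨ mAdj G q p))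
          (projf x) (projf y) := by
      intro x y h
      induction h with
      | refl => exact .refl
      | tail _ hstep2 ih =>
        obtain ⟨⟨hm1, hm2⟩, ⟨hn1, hn2⟩, hor⟩ := hstep2
        rcases hor with h | h
        · exact ih.trans (hstep _ _ hm1 hm2 hn1 hn2 h)
        · exact ih.trans (rtg_symm (fun p q hh => ⟨hh.2.1, hh.1, hh.2.2.symm⟩)
            (hstep _ _ hn1 hn2 hm1 hm2 h))
    have hfin := hlift _ _ hKC
    have hpa : projf ((eW R).symm a).val = a := by
      rw [hproj1 _ ((eW R).symm a).prop,
        show (⟨((eW R).symm a).val, ((eW R).symm a).prop⟩ : ↥(W0 R)) = (eW R).symm a from rfl]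
      exact Equiv.apply_symm_apply _ _
    have hpb : projf ((eW R).symm b).val = b := by
      rw [hproj1 _ ((eW R).symm b).prop,
        show (⟨((eW R).symm b).val, ((eW R).symm b).prop⟩ : ↥(W0 R)) = (eW R).symm b from rfl]
      exact Equiv.apply_symm_apply _ _
    rwa [hpa, hpb] at hfin
  have hGroot : ∃! w : G.W, mInDeg G w = 0 := by
    refine ⟨eW R ⟨r, hrW⟩, ?_, ?_⟩
    · show mInDeg G (eW R ⟨r, hrW⟩) = 0
      rw [hIn]
      exact hr0
    · intro y hy
      have hy2 := hIn ((eW R).symm y)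
      have hey : eW R ((eW R).symm y) = y := Equiv.apply_symm_apply _ _
      rw [hey] at hy2
      have hvr : (((eW R).symm y) : V) = r := hruu _ (by rw [← hy2, hy])
      have h3 : (eW R).symm y = ⟨r, hrW⟩ := Subtype.ext hvr
      rw [← h3, hey]
  have hGk : ({v : G.W | mInDeg G v = 2}).ncard = k := by
    have h1 : {v : G.W | mInDeg G v = 2} = eW R '' {w : ↥(W0 R) | inDeg R w.val = 2} := by
      ext v
      simp only [Set.mem_setOf_eq, Set.mem_image]
      constructor
      · intro hv
        refine ⟨(eW R).symm v, ?_, Equiv.apply_symm_apply _ _⟩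
        have h2 := hIn ((eW R).symm v)
        erw [Equiv.apply_symm_apply] at h2
        rw [Set.mem_setOf_eq, ← h2]
        exact hv
      · rintro ⟨w, hw, rfl⟩
        rw [hIn]
        exact hw
    have h1b := ncard_equiv_image (eW R) {w : ↥(W0 R) | inDeg R w.val = 2}
    erw [h1, h1b]
    have h2 : (Subtype.val '' {w : ↥(W0 R) | inDeg R w.val = 2}) = {v : V | inDeg R v = 2} := by
      ext v
      simp only [Set.mem_image, Set.mem_setOf_eq]
      constructor
      · rintro ⟨w, hw, rfl⟩
        exact hw
      · intro hv
        exact ⟨⟨v, Or.inr (Or.inl hv)⟩, hv, rfl⟩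
    rw [← Set.ncard_image_of_injective _ Subtype.val_injective, h2]
    exact hcount
  have hGdeg : ∀ v : G.W, (mInDeg G v = 0 ∧ mOutDeg G v = 2) ∨
      (mInDeg G v = 2 ∧ mOutDeg G v ≤ 1) ∨ (mInDeg G v = 1 ∧ mOutDeg G v = 2) := by
    intro v
    have hv : v = eW R ((eW R).symm v) := (Equiv.apply_symm_apply _ _).symm
    have hin := hIn ((eW R).symm v)
    have hout := hOut ((eW R).symm v)
    rw [← hv] at hin hout
    have hwW := ((eW R).symm v).prop
    have hwnl : ¬ IsLf R ((eW R).symm v).val := W0_not_isLf hphy hwW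
    rcases hphy.2.2 ((eW R).symm v).val with ⟨h1, h2⟩ | ⟨h1, h2⟩ | ⟨h1, h2⟩ | ⟨h1, h2⟩
    · left
      refine ⟨by rw [hin]; exact h1, ?_⟩
      rw [hout]
      have hxru : ∀ x, inDeg R x = 0 → x = ((eW R).symm v).val :=
        fun x hx => (hruu x hx).trans (hruu _ h1).symm
      have he : {c | R ((eW R).symm v).val c ∧ ¬ IsLf R c} = {c | R ((eW R).symm v).val c} := by
        ext c
        simp only [Set.mem_setOf_eq, and_iff_left_iff_imp]
        intro hc
        exact root_child_not_isLf hphy hnc hrec h1 hxru hc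
      rw [he]
      exact h2
    · right
      right
      refine ⟨by rw [hin]; exact h1, ?_⟩
      have hthird : ∀ c, R ((eW R).symm v).val c → ¬ IsLf R c := by
        rcases hwW with h0 | h2' | ⟨_, hall⟩
        · omega
        · omega
        · exact hall
      rw [hout]
      have he : {c | R ((eW R).symm v).val c ∧ ¬ IsLf R c} = {c | R ((eW R).symm v).val c} := by
        ext c
        simp only [Set.mem_setOf_eq, and_iff_left_iff_imp]
        intro hc
        exact hthird c hc
      rw [he]
      exact h2
    · right
      left
      refine ⟨by rw [hin]; exact h1, ?_⟩
      rw [hout]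
      calc ({c | R ((eW R).symm v).val c ∧ ¬ IsLf R c}).ncard
          ≤ ({c | R ((eW R).symm v).val c} : Set V).ncard :=
            Set.ncard_le_ncard (fun c hc => hc.1) (Set.toFinite _)
        _ = 1 := h2
    · exact absurd h2 hwnl
  haveI hfW : Finite G.W := by
    rw [hGdef]
    exact inferInstanceAs (Finite (Fin _))
  haveI hfE : Finite G.E := by
    rw [hGdef]
    exact inferInstanceAs (Finite (Fin _))
  refine ⟨G, ⟨hfW, hfE, hGacy, hGconn, hG2conn, hGroot, hGk, hGdeg⟩,
    hphy, φ, ψ, hφinj, ?_, ?_, ?_, ?_, ?_, ?_, ?_, ?_⟩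
  · -- chains
    intro i
    rw [hfull i]
    exact chain_fullpath hwf hphy hnc _ ((eE R).symm i).prop.2.2 _ ((eE R).symm i).prop.1
  · -- nodup
    intro i
    exact chainV_nodup hwf hphy hnc _
  · -- disjoint
    intro i i' hne x hx hx'
    rw [hψdef] at hx hx'
    refine chains_disjoint hwf hphy hnc ((eE R).symm i).prop.2.1 ((eE R).symm i').prop.2.1
      ((eE R).symm i).prop.1 ((eE R).symm i).prop.2.2 ((eE R).symm i').prop.1
      ((eE R).symm i').prop.2.2 ?_ x hx hx'
    intro h
    apply hne
    apply (eE R).symm.injective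
    apply Subtype.ext
    have h1 : ((eE R).symm i).val = (((eE R).symm i).val.1, ((eE R).symm i).val.2) := rfl
    have h2 : ((eE R).symm i').val = (((eE R).symm i').val.1, ((eE R).symm i').val.2) := rfl
    rw [h1, h2, h]
  · -- interior not φ
    intro i x hx w
    have hs := chainV_mem_spec hwf hphy hnc _ ((eE R).symm i).prop.2.2 x hx
    intro hxw
    rw [hxw, hφdef] at hs
    exact hs.1 ((eW R).symm w).prop
  · -- interior has leaf child
    intro i x hx
    have hs := chainV_mem_spec hwf hphy hnc _ ((eE R).symm i).prop.2.2 x hx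
    obtain ⟨_, ℓ, c, hℓ, _, hℓR, _, _⟩ := subdiv_struct hphy hnc hs.1 hs.2.1
    exact ⟨ℓ, hℓ, hℓR⟩
  · -- recomb sink has leaf child
    intro w hw2 hw0
    have hvW : φ w ∈ W0 R := ((eW R).symm w).prop
    have hvnl : ¬ IsLf R (φ w) := W0_not_isLf hphy hvW
    obtain ⟨c, hc⟩ := not_isLf_spec hvnl
    have hOutw := hOut ((eW R).symm w)
    erw [Equiv.apply_symm_apply] at hOutw
    have hempty : ({c | R (φ w) c ∧ ¬ IsLf R c} : Set V) = ∅ :=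
      (Set.ncard_eq_zero (Set.toFinite _)).1 (by rw [← hOutw, hw0])
    have hcl : IsLf R c := by
      by_contra hcn
      have : c ∈ ({c | R (φ w) c ∧ ¬ IsLf R c} : Set V) := ⟨hc, hcn⟩
      rw [hempty] at this
      exact this
    exact ⟨c, hcl, hc⟩
  · -- covering
    intro v
    by_cases hlv : IsLf R v
    · exact Or.inr (Or.inr hlv)
    by_cases hvW : v ∈ W0 R
    · exact Or.inl ⟨eW R ⟨v, hvW⟩, (hWval ⟨v, hvW⟩).symm⟩
    · refine Or.inr (Or.inl ?_)
      obtain ⟨htW, b0, hb1, hb2, hb3, hb4⟩ := topV_spec hphy hnc hwf2 v hlv hvW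
      have hE : (topV R hwf2 v, b0) ∈ E0 R := ⟨hb1, htW, hb3⟩
      refine ⟨eE R ⟨_, hE⟩, ?_⟩
      rw [hψdef]
      simp only [Equiv.symm_apply_apply]
      exact chain_mem_of_sub hwf hphy hnc b0 v hb2 hb3 hb4
  · -- arcs
    intro a b hab
    by_cases hlb : IsLf R b
    · refine Or.inr ⟨hlb, ?_⟩
      by_cases haW : a ∈ W0 R
      · right
        have hin2 : inDeg R a = 2 := by
          rcases haW with h0 | h2 | ⟨hsp1, hall⟩
          · exact absurd hlb (root_child_not_isLf hphy hnc hrec h0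
              (fun x hx => (hruu x hx).trans (hruu a h0).symm) hab)
          · exact h2
          · exact absurd hlb (hall b hab)
        have hout1 : outDeg R a = 1 := by
          rcases hphy.2.2 a with ⟨h1, h2⟩ | ⟨h1, h2⟩ | ⟨h1, h2⟩ | ⟨h1, h2⟩ <;> omega
        obtain ⟨c0, hc0, hc0u⟩ := outDeg_one_spec hout1
        refine ⟨eW R ⟨a, haW⟩, ?_, ?_, (hWval ⟨a, haW⟩).symm⟩
        · rw [hIn]
          exact hin2
        · rw [hOut]
          refine (Set.ncard_eq_zero (Set.toFinite _)).2 ?_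
          ext c
          simp only [Set.mem_setOf_eq, Set.mem_empty_iff_false, iff_false, not_and, not_not]
          intro hc
          rw [hc0u c hc, ← hc0u b hab]
          exact hlb
      · left
        have hanl : ¬ IsLf R a := parent_not_isLf hab
        obtain ⟨htW, b0, hb1, hb2, hb3, hb4⟩ := topV_spec hphy hnc hwf2 a hanl haW
        have hE : (topV R hwf2 a, b0) ∈ E0 R := ⟨hb1, htW, hb3⟩
        refine ⟨eE R ⟨_, hE⟩, ?_⟩
        rw [hψdef]
        simp only [Equiv.symm_apply_apply]
        exact chain_mem_of_sub hwf hphy hnc b0 a hb2 hb3 hb4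
    · left
      by_cases haW : a ∈ W0 R
      · have hE : (a, b) ∈ E0 R := ⟨hab, haW, hlb⟩
        refine ⟨eE R ⟨_, hE⟩, ?_⟩
        erw [hfull]
        simp only [Equiv.symm_apply_apply]
        by_cases hbW : b ∈ W0 R
        · refine ⟨[], [], ?_⟩
          rw [chainV_of_W0 hwf hbW, nextV_of_W0 hwf hbW]
          rfl
        · obtain ⟨tl, htl⟩ := chain_head hwf hbW
          refine ⟨[], tl ++ [nextV R hwf b], ?_⟩
          rw [htl]
          simp
      · have hanl : ¬ IsLf R a := parent_not_isLf hab
        obtain ⟨htW, b0, hb1, hb2, hb3, hb4⟩ := topV_spec hphy hnc hwf2 a hanl haW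
        have hE : (topV R hwf2 a, b0) ∈ E0 R := ⟨hb1, htW, hb3⟩
        refine ⟨eE R ⟨_, hE⟩, ?_⟩
        erw [hfull]
        simp only [Equiv.symm_apply_apply]
        by_cases hbW : b ∈ W0 R
        · have hend : ∀ c, R a c → ¬ IsLf R c → c ∈ W0 R := by
            intro c hc hcnl
            have : c = b := subStep_det hphy hnc haW hanl hc hcnl hab hlb
            rw [this]
            exact hbW
          have hlast := chain_getLast hwf hphy hnc b0 a hb2 hb3 hb4 hend
          have hnext : nextV R hwf b0 = b := by
            rw [nextV_sub_invariant hwf hphy hnc b0 hb2 hb3 a hb4]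
            have hex : ∃ c, R a c ∧ ¬ IsLf R c := ⟨b, hab, hlb⟩
            have hbc : hex.choose = b := subStep_det hphy hnc haW hanl hex.choose_spec.1
              hex.choose_spec.2 hab hlb
            rw [(chainV_of_sub hwf haW hex).2, hbc, nextV_of_W0 hwf hbW]
          have hdl := List.dropLast_append_getLast? a hlast
          refine ⟨topV R hwf2 a :: (chainV R hwf b0).dropLast, [], ?_⟩
          rw [hnext, ← hdl]
          simp
        · have hsub : subR R a b := ⟨hab, hbW, hlb⟩
          obtain ⟨l1, l2, hl⟩ := chain_pair hwf hphy hnc b0 a b hb2 hb3 hb4 hsub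
          refine ⟨topV R hwf2 a :: l1, l2 ++ [nextV R hwf b0], ?_⟩
          rw [hl]
          simp

end Assemble

end Phylo

open Phylo in
/-- A strict level-k network (k ≥ 1) is a simple level-k network iff it
contains no nontrivial cut-arcs (a cut-arc `(u,v)` being trivial when `v` is a leaf). -/
theorem stmt6 {V : Type*} [Fintype V] (k : ℕ) (hk : 1 ≤ k) (R : V → V → Prop)
    (hgood : GoodNet R) (hlev : LevelK k R) (hstrict : ¬ LevelK (k - 1) R) :
    SimpleLevel k R ↔ ¬ ∃ u v : V, CutArc R u v ∧ ¬ IsLf R v := by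
  constructor
  · intro hsim
    exact no_cutarc_of_simple hsim
  · intro hnc
    have hnc' : ∀ a b, CutArc R a b → IsLf R b := by
      intro a b hab
      by_contra h
      exact hnc ⟨a, b, hab, h⟩
    exact simple_of_no_cutarc k hk hgood hlev hstrict hnc'
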